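/- arXiv:2409.03871 — 5 statements merged into one kernel-verified Lean document; each statement's English description precedes it below -/
import Mathlib

section
/- Bound on R_{T1}: Under the setup assumptions together with the interaction condition, let R_{T1}(t₀, t₁) := ∑_{q=0}^{r−1} [ Q_{V1}(t_q, t_{q+1}) + Q_{V2}(t_q, t_{q+1}) + Q_1(t_q, t_{q+1}) + R_{L1}(t_q, t_{q+1}) ] − I(t_r, t₁) + Q_{V1}(t_r, t₁) + Q_{V2}(t_r, t₁) + Q_1(t_r, t₁) + Q_{1T}(t_r, t₁) + H(t_r, t₁), with the terms Q_{V1}, Q_{V2}, Q_1, Q_{1T}, H, I and R_{L1} as defined in the context. Then there exist constants c₁, c₂ > 0 depending only on l and L (and not on t₀, t₁, ω₁, Λ₁ or x₀) such that ‖R_{T1}(t₀, t₁)‖ ≤ Λ₁ ‖x₀‖ ω₁^{p′−1} ( c₁ (t₁ − t₀) + c₂ ). -/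
set_option maxHeartbeats 4000000


open MeasureTheory Real Filter

noncomputable section

/-- The state space `ℝ^n`. -/
abbrev E (n : ℕ) := EuclideanSpace ℝ (Fin n)

/-- Lie derivative `L_{f_a} f_b (t,x) = D_x f_b(t,x) [f_a(t,x)]`. -/
def lieDeriv {n : ℕ} (f : ℕ → ℝ → E n → E n)
    (Df : ℕ → ℝ → E n → (E n →L[ℝ] E n)) (a b : ℕ) (t : ℝ) (x : E n) : E n :=
  Df b t x (f a t x)

/-- Second Lie derivative `L_{f_m} L_{f_j} f_i (t,x) = D_x (L_{f_j} f_i)(t,x) [f_m(t,x)]`. -/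
def lieDeriv2 {n : ℕ} (f : ℕ → ℝ → E n → E n)
    (Df : ℕ → ℝ → E n → (E n →L[ℝ] E n))
    (DLf : ℕ → ℕ → ℝ → E n → (E n →L[ℝ] E n)) (m j i : ℕ) (t : ℝ) (x : E n) : E n :=
  DLf j i t x (f m t x)

/-- Lie bracket `[f_i, f_j] = L_{f_i} f_j − L_{f_j} f_i`. -/
def lieBracket {n : ℕ} (f : ℕ → ℝ → E n → E n)
    (Df : ℕ → ℝ → E n → (E n →L[ℝ] E n)) (i j : ℕ) (t : ℝ) (x : E n) : E n :=
  lieDeriv f Df i j t x - lieDeriv f Df j i t x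

/-- `γ_{ij}(ω) = (ω^{p_i+p_j}/T) ∫₀^T ∫₀^θ u_j(ωθ) u_i(ωτ) dτ dθ`, `T = 2π/ω`. -/
def gammaCoeff (p : ℕ → ℝ) (u : ℕ → ℝ → ℝ) (i j : ℕ) (ω : ℝ) : ℝ :=
  ω ^ (p i + p j) / (2 * π / ω) *
    ∫ θ in (0:ℝ)..(2 * π / ω), ∫ τ in (0:ℝ)..θ, u j (ω * θ) * u i (ω * τ)

/-- Regularity of a time-dependent vector field: continuous in the first argument,
globally uniformly `L`-Lipschitz in the second argument, and vanishing at `x = 0`. -/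
def RegVF {n : ℕ} (L : ℝ) (g : ℝ → E n → E n) : Prop :=
  (∀ x, Continuous fun t => g t x) ∧
  (∀ t x y, ‖g t x - g t y‖ ≤ L * ‖x - y‖) ∧
  (∀ t, g t 0 = 0)

/-- Standing assumptions: dither assumptions and vector-field assumptions. -/
structure Hyps {n : ℕ} (l : ℕ)
    (f : ℕ → ℝ → E n → E n)
    (Df : ℕ → ℝ → E n → (E n →L[ℝ] E n))
    (ft : ℕ → ℝ → E n → E n)
    (Lft : ℕ → ℕ → ℝ → E n → E n)
    (DLf : ℕ → ℕ → ℝ → E n → (E n →L[ℝ] E n))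
    (u : ℕ → ℝ → ℝ) (p : ℕ → ℝ) (L : ℝ) : Prop where
  hp0 : p 0 = 0
  hu0 : ∀ t, u 0 t = 1
  hp : ∀ i, 1 ≤ i → i ≤ l → p i ∈ Set.Ioo (0:ℝ) 1
  humeas : ∀ i, i ≤ l → Measurable (u i)
  hubdd : ∀ i, i ≤ l → ∀ t, |u i t| ≤ 1
  huper : ∀ i, i ≤ l → ∀ t, u i (t + 2 * π) = u i t
  huzm : ∀ i, 1 ≤ i → i ≤ l → (∫ t in (0:ℝ)..(2 * π), u i t) = 0
  hLpos : 0 < L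
  hDf : ∀ i, i ≤ l → ∀ t x, HasFDerivAt (f i t) (Df i t x) x
  hft : ∀ i, i ≤ l → ∀ x t, HasDerivAt (fun s => f i s x) (ft i t x) t
  hLft : ∀ i j, i ≤ l → j ≤ l → ∀ x t,
    HasDerivAt (fun s => lieDeriv f Df j i s x) (Lft j i t x) t
  hDLf : ∀ i j, i ≤ l → j ≤ l → ∀ t x,
    HasFDerivAt (fun y => lieDeriv f Df j i t y) (DLf j i t x) x
  hreg_f : ∀ i, i ≤ l → RegVF L (f i)
  hreg_ft : ∀ i, i ≤ l → RegVF L (ft i)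
  hreg_Lf : ∀ i j, i ≤ l → j ≤ l → RegVF L (lieDeriv f Df j i)
  hreg_Lft : ∀ i j, i ≤ l → j ≤ l → RegVF L (Lft j i)
  hreg_LLf : ∀ i j m, i ≤ l → j ≤ l → m ≤ l → RegVF L (lieDeriv2 f Df DLf m j i)

/-- The interaction condition on the powers `p_i` and the Lie brackets. -/
def InteractionCondition {n : ℕ} (l : ℕ) (f : ℕ → ℝ → E n → E n)
    (Df : ℕ → ℝ → E n → (E n →L[ℝ] E n)) (u : ℕ → ℝ → ℝ) (p : ℕ → ℝ) : Prop :=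
  ∀ i j, 1 ≤ i → i ≤ l → 1 ≤ j → j ≤ l → 1 < p i + p j →
    (∀ ω : ℝ, 0 < ω → gammaCoeff p u i j ω = 0) ∨
    (∀ (t : ℝ) (x : E n), lieBracket f Df i j t x = 0)

/-- `x` is a (Carathéodory, i.e. integral-form) solution of the input-affine system (S)
with dither frequency `ω` on the set `s`, with initial time `t₀`. -/
def IsSSol {n : ℕ} (l : ℕ) (f : ℕ → ℝ → E n → E n) (u : ℕ → ℝ → ℝ) (p : ℕ → ℝ)
    (ω : ℝ) (x : ℝ → E n) (s : Set ℝ) (t₀ : ℝ) : Prop :=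
  ContinuousOn x s ∧
  ∀ t ∈ s, x t = x t₀ + ∫ τ in t₀..t,
    (f 0 τ (x τ) + ∑ i ∈ Finset.Icc 1 l, (ω ^ p i * u i (ω * τ)) • f i τ (x τ))

/-- `x` is a solution of the associated Lie-bracket system (LBS), with coefficients
`ν i j = lim_{ω → ∞} γ_{ij}(ω)`, on the set `s`, with initial time `t₀`. -/
def IsLBSSol {n : ℕ} (l : ℕ) (f : ℕ → ℝ → E n → E n)
    (Df : ℕ → ℝ → E n → (E n →L[ℝ] E n)) (ν : ℕ → ℕ → ℝ)
    (x : ℝ → E n) (s : Set ℝ) (t₀ : ℝ) : Prop :=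
  ContinuousOn x s ∧
  ∀ t ∈ s, x t = x t₀ + ∫ τ in t₀..t,
    (f 0 τ (x τ) + ∑ i ∈ Finset.Icc 1 l, ∑ j ∈ Finset.Ioc i l,
      ν i j • lieBracket f Df i j τ (x τ))

end
noncomputable section

/-- `V_i(t_s, t_e) = ∫_{t_s}^{t_e} ω₁^{p_i} u_i(ω₁ θ) dθ`. -/
def Vi (u : ℕ → ℝ → ℝ) (p : ℕ → ℝ) (ω₁ : ℝ) (i : ℕ) (ts te : ℝ) : ℝ :=
  ∫ θ in ts..te, ω₁ ^ p i * u i (ω₁ * θ)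

/-- `V_{ij}(t_s, t_e) = ∫_{t_s}^{t_e} ω₁^{p_i} u_i(ω₁ θ) V_j(t_s, θ) dθ`. -/
def Vij (u : ℕ → ℝ → ℝ) (p : ℕ → ℝ) (ω₁ : ℝ) (i j : ℕ) (ts te : ℝ) : ℝ :=
  ∫ θ in ts..te, (ω₁ ^ p i * u i (ω₁ * θ)) * Vi u p ω₁ j ts θ

/-- The remainder `R(t_s, t_e)`. -/
def Rrem {n : ℕ} (l : ℕ) (f : ℕ → ℝ → E n → E n)
    (Df : ℕ → ℝ → E n → (E n →L[ℝ] E n))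
    (DLf : ℕ → ℕ → ℝ → E n → (E n →L[ℝ] E n))
    (u : ℕ → ℝ → ℝ) (p : ℕ → ℝ) (ω₁ : ℝ) (x : ℝ → E n) (ts te : ℝ) : E n :=
  ∑ i ∈ Finset.Icc 1 l, ∑ j ∈ Finset.Icc 0 l, ∑ m ∈ Finset.Icc 0 l,
    ω₁ ^ (p i + p j + p m) •
      ∫ θ in ts..te, u i (ω₁ * θ) •
        ∫ τ in ts..θ, u j (ω₁ * τ) •
          ∫ σ in ts..τ, u m (ω₁ * σ) • lieDeriv2 f Df DLf m j i σ (x σ)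

/-- The term `Q_{V1}(t_s, t_e)`. -/
def QV1 {n : ℕ} (l : ℕ) (ft : ℕ → ℝ → E n → E n)
    (u : ℕ → ℝ → ℝ) (p : ℕ → ℝ) (ω₁ : ℝ) (x : ℝ → E n) (ts te : ℝ) : E n :=
  ∑ i ∈ Finset.Icc 1 l, ω₁ ^ p i •
    ∫ θ in ts..te, u i (ω₁ * θ) • ∫ τ in ts..θ, ft i τ (x τ)

/-- The term `Q_{V2}(t_s, t_e)`. -/
def QV2 {n : ℕ} (l : ℕ) (Lft : ℕ → ℕ → ℝ → E n → E n)
    (u : ℕ → ℝ → ℝ) (p : ℕ → ℝ) (ω₁ : ℝ) (x : ℝ → E n) (ts te : ℝ) : E n :=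
  ∑ i ∈ Finset.Ico 1 l, ∑ j ∈ Finset.Icc 0 l,
    ω₁ ^ (p i + p j) •
      ∫ θ in ts..te, u i (ω₁ * θ) •
        ∫ τ in ts..θ, u j (ω₁ * τ) • ∫ σ in ts..τ, Lft j i σ (x σ)

/-- The term `Q_1(t_s, t_e)`. -/
def Q1 {n : ℕ} (l : ℕ) (f : ℕ → ℝ → E n → E n)
    (Df : ℕ → ℝ → E n → (E n →L[ℝ] E n))
    (u : ℕ → ℝ → ℝ) (p : ℕ → ℝ) (ω₁ : ℝ) (x : ℝ → E n) (ts te : ℝ) : E n :=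
  ∑ i ∈ Finset.Icc 1 l, Vij u p ω₁ i 0 ts te • lieDeriv f Df 0 i ts (x ts)

/-- The term `Q_{1T}(t_s, t_e)`. -/
def Q1T {n : ℕ} (l : ℕ) (f : ℕ → ℝ → E n → E n)
    (Df : ℕ → ℝ → E n → (E n →L[ℝ] E n))
    (u : ℕ → ℝ → ℝ) (p : ℕ → ℝ) (ω₁ : ℝ) (x : ℝ → E n) (ts te : ℝ) : E n :=
  (∑ i ∈ Finset.Icc 1 l, ∑ j ∈ Finset.Ioc i l,
    (Vi u p ω₁ i ts te * Vi u p ω₁ j ts te) • lieDeriv f Df j i ts (x ts))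
  + (1/2 : ℝ) • ∑ i ∈ Finset.Icc 1 l,
      ((Vi u p ω₁ i ts te) ^ 2) • lieDeriv f Df i i ts (x ts)

/-- The term `H(t_s, t_e)`. -/
def Hterm {n : ℕ} (l : ℕ) (f : ℕ → ℝ → E n → E n)
    (Df : ℕ → ℝ → E n → (E n →L[ℝ] E n))
    (u : ℕ → ℝ → ℝ) (p : ℕ → ℝ) (ω₁ : ℝ) (x : ℝ → E n) (ts te : ℝ) : E n :=
  (∑ i ∈ Finset.Icc 1 l, Vi u p ω₁ i ts te • f i ts (x ts))
  + ∑ i ∈ Finset.Icc 1 l, ∑ j ∈ Finset.Ioc i l,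
      Vij u p ω₁ j i ts te • lieBracket f Df i j ts (x ts)

/-- The term `I(t_s, t_e)`. -/
def Iterm {n : ℕ} (l : ℕ) (f : ℕ → ℝ → E n → E n)
    (Df : ℕ → ℝ → E n → (E n →L[ℝ] E n))
    (u : ℕ → ℝ → ℝ) (p : ℕ → ℝ) (ω₁ : ℝ) (x : ℝ → E n) (ts te : ℝ) : E n :=
  ∫ θ in ts..te, ∑ i ∈ Finset.Icc 1 l, ∑ j ∈ Finset.Ioc i l,
    gammaCoeff p u i j ω₁ • lieBracket f Df i j θ (x θ)

/-- The term `R_{L1}(t_s, t_e)`. -/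
def RL1 {n : ℕ} (l : ℕ) (f : ℕ → ℝ → E n → E n)
    (Df : ℕ → ℝ → E n → (E n →L[ℝ] E n))
    (u : ℕ → ℝ → ℝ) (p : ℕ → ℝ) (ω₁ : ℝ) (x : ℝ → E n) (ts te : ℝ) : E n :=
  ∑ i ∈ Finset.Icc 1 l, ∑ j ∈ Finset.Ioc i l,
    gammaCoeff p u i j ω₁ •
      ∫ θ in ts..te, (lieBracket f Df i j ts (x ts) - lieBracket f Df i j θ (x θ))

/-- The remainder `R_{T1}(t₀, t₁)`. -/
def RT1 {n : ℕ} (l : ℕ) (f : ℕ → ℝ → E n → E n)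
    (Df : ℕ → ℝ → E n → (E n →L[ℝ] E n))
    (ft : ℕ → ℝ → E n → E n) (Lft : ℕ → ℕ → ℝ → E n → E n)
    (u : ℕ → ℝ → ℝ) (p : ℕ → ℝ) (ω₁ : ℝ) (x : ℝ → E n) (t₀ t₁ : ℝ) : E n :=
  let T₁ : ℝ := 2 * π / ω₁
  let r : ℕ := ⌊(t₁ - t₀) / T₁⌋₊
  let tq : ℕ → ℝ := fun q => t₀ + (q : ℝ) * T₁
  (∑ q ∈ Finset.range r,
      (QV1 l ft u p ω₁ x (tq q) (tq (q+1)) + QV2 l Lft u p ω₁ x (tq q) (tq (q+1))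
        + Q1 l f Df u p ω₁ x (tq q) (tq (q+1)) + RL1 l f Df u p ω₁ x (tq q) (tq (q+1))))
    - Iterm l f Df u p ω₁ x (tq r) t₁
    + QV1 l ft u p ω₁ x (tq r) t₁ + QV2 l Lft u p ω₁ x (tq r) t₁
    + Q1 l f Df u p ω₁ x (tq r) t₁ + Q1T l f Df u p ω₁ x (tq r) t₁
    + Hterm l f Df u p ω₁ x (tq r) t₁

end


lemma nest_bound {F : Type*} [NormedAddCommGroup F] [NormedSpace ℝ F]
    {a b C : ℝ} {g : ℝ → F} (hab : a ≤ b)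
    (hg : ∀ θ ∈ Set.Ioc a b, ‖g θ‖ ≤ C) :
    ‖∫ θ in a..b, g θ‖ ≤ C * (b - a) := by
  have h := intervalIntegral.norm_integral_le_of_norm_le_const (C := C) (f := g) (a := a) (b := b)
    (by rw [Set.uIoc_of_le hab]; exact hg)
  rwa [abs_of_nonneg (by linarith)] at h

lemma mySum_norm_le {ι F : Type*} [NormedAddCommGroup F] (s : Finset ι) {g : ι → F}
    {C m : ℝ} (hC : 0 ≤ C) (hcard : (s.card : ℝ) ≤ m) (h : ∀ i ∈ s, ‖g i‖ ≤ C) :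
    ‖∑ i ∈ s, g i‖ ≤ m * C := by
  refine (norm_sum_le s g).trans ?_
  refine (Finset.sum_le_card_nsmul s _ C h).trans ?_
  rw [nsmul_eq_mul]
  exact mul_le_mul_of_nonneg_right hcard hC

lemma normVF_le {n : ℕ} {L : ℝ} {g : ℝ → E n → E n} (h : RegVF L g) (t : ℝ) (y : E n) :
    ‖g t y‖ ≤ L * ‖y‖ := by
  have h2 := h.2.1 t y 0
  simpa [h.2.2 t] using h2

lemma lip_time {F : Type*} [NormedAddCommGroup F] [NormedSpace ℝ F] {g g' : ℝ → F} {C : ℝ}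
    (h : ∀ t, HasDerivAt g (g' t) t) (hb : ∀ t, ‖g' t‖ ≤ C) (a b : ℝ) :
    ‖g b - g a‖ ≤ C * |b - a| := by
  have h2 := Convex.norm_image_sub_le_of_norm_hasDerivWithin_le (𝕜 := ℝ)
    (f := g) (f' := g') (s := Set.univ)
    (fun z _ => (h z).hasDerivWithinAt) (fun z _ => hb z) convex_univ
    (Set.mem_univ a) (Set.mem_univ b)
  simpa [Real.norm_eq_abs] using h2

lemma contOn_comp {n : ℕ} {L : ℝ} {g : ℝ → E n → E n} (hg : RegVF L g)
    {x : ℝ → E n} {s : Set ℝ} (hx : ContinuousOn x s) :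
    ContinuousOn (fun t => g t (x t)) s := by
  intro t ht
  have h1 : Filter.Tendsto (fun τ => g τ (x τ) - g τ (x t)) (nhdsWithin t s) (nhds 0) := by
    apply squeeze_zero_norm (a := fun τ => L * ‖x τ - x t‖)
    · intro τ; exact hg.2.1 τ (x τ) (x t)
    · have hx0 : Filter.Tendsto (fun τ => x τ - x t) (nhdsWithin t s) (nhds 0) := by
        simpa using Filter.Tendsto.sub (hx t ht) (tendsto_const_nhds (x := x t))
      have := (continuous_norm.tendsto (0 : E n)).comp hx0
      simpa using this.const_mul L
  have h2 : Filter.Tendsto (fun τ => g τ (x t)) (nhdsWithin t s) (nhds (g t (x t))) :=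
    ((hg.1 (x t)).tendsto t).mono_left nhdsWithin_le_nhds
  have := h1.add h2
  exact (by simpa using this : Filter.Tendsto (fun τ => g τ (x τ)) (nhdsWithin t s) (nhds (g t (x t))))
lemma layer_bound {F : Type*} [NormedAddCommGroup F] [NormedSpace ℝ F]
    {a b C : ℝ} {v : ℝ → ℝ} {G : ℝ → F} (hab : a ≤ b) (hC : 0 ≤ C)
    (hv : ∀ t, |v t| ≤ 1) (hG : ∀ θ ∈ Set.Ioc a b, ‖G θ‖ ≤ C) :
    ‖∫ θ in a..b, v θ • G θ‖ ≤ C * (b - a) := by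
  apply nest_bound hab
  intro θ hθ
  rw [norm_smul, Real.norm_eq_abs]
  calc |v θ| * ‖G θ‖ ≤ 1 * C := mul_le_mul (hv θ) (hG θ hθ) (norm_nonneg _) one_pos.le
    _ = C := one_mul C

lemma nest2_bound {F : Type*} [NormedAddCommGroup F] [NormedSpace ℝ F]
    {a b C : ℝ} {v1 : ℝ → ℝ} {g : ℝ → F} (hab : a ≤ b) (hC : 0 ≤ C)
    (hv1 : ∀ t, |v1 t| ≤ 1) (hg : ∀ σ ∈ Set.Ioc a b, ‖g σ‖ ≤ C) :
    ‖∫ θ in a..b, v1 θ • ∫ τ in a..θ, g τ‖ ≤ C * (b - a) ^ 2 := by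
  have hba : 0 ≤ b - a := by linarith
  have h := layer_bound (v := v1) (G := fun θ => ∫ τ in a..θ, g τ) (C := C * (b - a)) hab (mul_nonneg hC hba) hv1 ?_
  · refine h.trans (le_of_eq (by ring))
  · intro θ hθ
    have h2 := nest_bound hθ.1.le (fun τ hτ => hg τ (Set.Ioc_subset_Ioc_right hθ.2 hτ))
    calc ‖∫ τ in a..θ, g τ‖ ≤ C * (θ - a) := h2
      _ ≤ C * (b - a) := mul_le_mul_of_nonneg_left (by linarith [hθ.2]) hC

lemma nest3_bound {F : Type*} [NormedAddCommGroup F] [NormedSpace ℝ F]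
    {a b C : ℝ} {v1 v2 : ℝ → ℝ} {g : ℝ → F} (hab : a ≤ b) (hC : 0 ≤ C)
    (hv1 : ∀ t, |v1 t| ≤ 1) (hv2 : ∀ t, |v2 t| ≤ 1)
    (hg : ∀ σ ∈ Set.Ioc a b, ‖g σ‖ ≤ C) :
    ‖∫ θ in a..b, v1 θ • ∫ τ in a..θ, v2 τ • ∫ σ in a..τ, g σ‖ ≤ C * (b - a) ^ 3 := by
  have hba : 0 ≤ b - a := by linarith
  have h := layer_bound (v := v1) (G := fun θ => ∫ τ in a..θ, v2 τ • ∫ σ in a..τ, g σ) (C := C * (b - a) ^ 2) hab (by positivity) hv1 ?_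
  · refine h.trans (le_of_eq (by ring))
  · intro θ hθ
    have h2 := nest2_bound (C := C) hθ.1.le hC hv2
      (fun σ hσ => hg σ (Set.Ioc_subset_Ioc_right hθ.2 hσ))
    calc ‖∫ τ in a..θ, v2 τ • ∫ σ in a..τ, g σ‖ ≤ C * (θ - a) ^ 2 := h2
      _ ≤ C * (b - a) ^ 2 := by
          apply mul_le_mul_of_nonneg_left _ hC
          have h1 : θ - a ≤ b - a := by linarith [hθ.2]
          have h0 : 0 ≤ θ - a := by linarith [hθ.1.le]
          nlinarith

lemma Vi_abs_le {u : ℕ → ℝ → ℝ} {p : ℕ → ℝ} {ω : ℝ} {i : ℕ} {a b : ℝ}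
    (hab : a ≤ b) (hω : 0 < ω) (hui : ∀ t, |u i t| ≤ 1) :
    |Vi u p ω i a b| ≤ ω ^ p i * (b - a) := by
  rw [Vi, ← Real.norm_eq_abs]
  apply nest_bound hab
  intro θ _
  rw [Real.norm_eq_abs, abs_mul, abs_of_nonneg (Real.rpow_nonneg hω.le _)]
  calc ω ^ p i * |u i (ω * θ)| ≤ ω ^ p i * 1 :=
        mul_le_mul_of_nonneg_left (hui _) (Real.rpow_nonneg hω.le _)
    _ = ω ^ p i := mul_one _

lemma Vij_abs_le {u : ℕ → ℝ → ℝ} {p : ℕ → ℝ} {ω : ℝ} {i j : ℕ} {a b : ℝ}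
    (hab : a ≤ b) (hω : 0 < ω) (hui : ∀ t, |u i t| ≤ 1) (huj : ∀ t, |u j t| ≤ 1) :
    |Vij u p ω i j a b| ≤ (ω ^ p i * ω ^ p j) * (b - a) ^ 2 := by
  rw [Vij, ← Real.norm_eq_abs]
  have hba : 0 ≤ b - a := by linarith
  have h := nest_bound (g := fun θ => (ω ^ p i * u i (ω * θ)) * Vi u p ω j a θ)
    (C := (ω ^ p i * ω ^ p j) * (b - a)) hab ?_
  · refine h.trans (le_of_eq (by ring))
  · intro θ hθ
    rw [Real.norm_eq_abs, abs_mul, abs_mul, abs_of_nonneg (Real.rpow_nonneg hω.le _)]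
    have h1 : |Vi u p ω j a θ| ≤ ω ^ p j * (θ - a) := Vi_abs_le hθ.1.le hω huj
    have h2 : ω ^ p i * |u i (ω * θ)| ≤ ω ^ p i :=
      (mul_le_mul_of_nonneg_left (hui _) (Real.rpow_nonneg hω.le _)).trans (le_of_eq (mul_one _))
    calc ω ^ p i * |u i (ω * θ)| * |Vi u p ω j a θ|
        ≤ ω ^ p i * (ω ^ p j * (θ - a)) := by
          apply mul_le_mul h2 h1 (abs_nonneg _) (Real.rpow_nonneg hω.le _)
      _ ≤ (ω ^ p i * ω ^ p j) * (b - a) := by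
          rw [mul_assoc]
          have h3 : θ - a ≤ b - a := by linarith [hθ.2]
          exact mul_le_mul_of_nonneg_left (mul_le_mul_of_nonneg_left h3
            (Real.rpow_nonneg hω.le _)) (Real.rpow_nonneg hω.le _)

lemma gamma_abs_le {p : ℕ → ℝ} {u : ℕ → ℝ → ℝ} {i j : ℕ} {ω : ℝ} (hω : 1 ≤ ω)
    (hui : ∀ t, |u i t| ≤ 1) (huj : ∀ t, |u j t| ≤ 1) (hp1 : p i + p j ≤ 1) :
    |gammaCoeff p u i j ω| ≤ 2 * π := by
  have hω0 : (0:ℝ) < ω := lt_of_lt_of_le one_pos hω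
  have hT : (0:ℝ) < 2 * π / ω := by positivity
  have hD : |∫ θ in (0:ℝ)..(2*π/ω), ∫ τ in (0:ℝ)..θ, u j (ω*θ) * u i (ω*τ)|
      ≤ (2*π/ω) * (2*π/ω) := by
    rw [← Real.norm_eq_abs]
    have h := nest_bound (F := ℝ) hT.le
      (g := fun θ => ∫ τ in (0:ℝ)..θ, u j (ω*θ) * u i (ω*τ)) (C := 2*π/ω) ?_
    · simpa using h
    · intro θ hθ
      have hin := nest_bound (F := ℝ) hθ.1.le
        (g := fun τ => u j (ω*θ) * u i (ω*τ)) (C := 1) ?_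
      · rw [Real.norm_eq_abs] at hin ⊢
        calc |∫ τ in (0:ℝ)..θ, u j (ω*θ) * u i (ω*τ)| ≤ 1 * (θ - 0) := hin
          _ = θ := by ring
          _ ≤ 2*π/ω := hθ.2
      · intro τ _
        rw [Real.norm_eq_abs, abs_mul]
        calc |u j (ω*θ)| * |u i (ω*τ)| ≤ 1 * 1 :=
              mul_le_mul (huj _) (hui _) (abs_nonneg _) one_pos.le
          _ = 1 := one_mul 1
  have hs0 : (0:ℝ) ≤ ω ^ (p i + p j) := (Real.rpow_pos_of_pos hω0 _).le
  rw [gammaCoeff, abs_mul, abs_div, abs_of_nonneg hs0, abs_of_nonneg hT.le]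
  calc ω ^ (p i + p j) / (2*π/ω) * |∫ θ in (0:ℝ)..(2*π/ω), ∫ τ in (0:ℝ)..θ, u j (ω*θ) * u i (ω*τ)|
      ≤ ω ^ (p i + p j) / (2*π/ω) * ((2*π/ω) * (2*π/ω)) := by
        apply mul_le_mul_of_nonneg_left hD (by positivity)
    _ = ω ^ (p i + p j) * (2*π/ω) := by field_simp
    _ ≤ ω * (2*π/ω) := by
        apply mul_le_mul_of_nonneg_right _ hT.le
        calc ω ^ (p i + p j) ≤ ω ^ (1:ℝ) := Real.rpow_le_rpow_of_exponent_le hω hp1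
          _ = ω := Real.rpow_one ω
    _ = 2*π := by field_simp
lemma norm_add4 {F : Type*} [NormedAddCommGroup F] (a b c d : F) :
    ‖a + b + c + d‖ ≤ ‖a‖ + ‖b‖ + ‖c‖ + ‖d‖ := by
  have h1 := norm_add_le (a + b + c) d
  have h2 := norm_add_le (a + b) c
  have h3 := norm_add_le a b
  linarith

lemma norm_comb7 {F : Type*} [NormedAddCommGroup F] (v1 v2 v3 v4 v5 v6 v7 : F) :
    ‖v1 - v2 + v3 + v4 + v5 + v6 + v7‖
      ≤ ‖v1‖ + ‖v2‖ + ‖v3‖ + ‖v4‖ + ‖v5‖ + ‖v6‖ + ‖v7‖ := by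
  have h1 := norm_add_le (v1 - v2 + v3 + v4 + v5 + v6) v7
  have h2 := norm_add_le (v1 - v2 + v3 + v4 + v5) v6
  have h3 := norm_add_le (v1 - v2 + v3 + v4) v5
  have h4 := norm_add_le (v1 - v2 + v3) v4
  have h5 := norm_add_le (v1 - v2) v3
  have h6 := norm_sub_le v1 v2
  linarith
/-- **Bound on `R_{T1}`** (Lemma 14): there are constants `c₁, c₂ > 0` depending only on
`l` and `L` such that `‖R_{T1}(t₀,t₁)‖ ≤ Λ₁ ‖x₀‖ ω₁^{p′−1} (c₁ (t₁ − t₀) + c₂)`. -/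
theorem bound_RT1 (l : ℕ) (L : ℝ) (hL : 0 < L) :
    ∃ c₁ c₂ : ℝ, 0 < c₁ ∧ 0 < c₂ ∧
      ∀ (n : ℕ)
        (f : ℕ → ℝ → E n → E n)
        (Df : ℕ → ℝ → E n → (E n →L[ℝ] E n))
        (ft : ℕ → ℝ → E n → E n)
        (Lft : ℕ → ℕ → ℝ → E n → E n)
        (DLf : ℕ → ℕ → ℝ → E n → (E n →L[ℝ] E n))
        (u : ℕ → ℝ → ℝ) (p : ℕ → ℝ),
        Hyps l f Df ft Lft DLf u p L →
        InteractionCondition l f Df u p →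
        ∀ (t₀ t₁ ω₁ Λ₁ : ℝ) (x₀ : E n) (x : ℝ → E n),
          t₀ < t₁ → 1 ≤ ω₁ → 1 ≤ Λ₁ →
          x t₀ = x₀ →
          IsSSol l f u p ω₁ x (Set.Icc t₀ t₁) t₀ →
          (∀ t ∈ Set.Icc t₀ t₁, ‖x t‖ ≤ Λ₁ * ‖x₀‖) →
          ∀ p' : ℝ,
            (∀ i, 1 ≤ i → i ≤ l → p i ≤ p') →
            (∃ i, 1 ≤ i ∧ i ≤ l ∧ p i = p') →
            ‖RT1 l f Df ft Lft u p ω₁ x t₀ t₁‖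
              ≤ Λ₁ * ‖x₀‖ * ω₁ ^ (p' - 1) * (c₁ * (t₁ - t₀) + c₂) := by
  classical
  refine ⟨L * (4*π*l + 4*π^2*l*(l+1) + 8*π^2*l^2*(1+L+L*l)) + 1,
    L * (8*π^2*l^2 + 4*π^2*l + 8*π^3*l*(l+1) + 4*π^2*l + 4*π^2*(l^2+l) + 2*π*l + 8*π^2*l^2) + 1,
    by positivity, by positivity, ?_⟩
  intro n f Df ft Lft DLf u p H hIC t₀ t₁ ω₁ Λ₁ x₀ x ht01 hω hΛ hx0 hsol hxb p' hp'max hp'wit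
  obtain ⟨i₀, hi₀1, hi₀l, hpi₀⟩ := hp'wit
  have hl1 : 1 ≤ l := le_trans hi₀1 hi₀l
  have hω0 : (0:ℝ) < ω₁ := lt_of_lt_of_le one_pos hω
  have hp'pos : 0 < p' := hpi₀ ▸ (H.hp i₀ hi₀1 hi₀l).1
  have hp'lt1 : p' < 1 := hpi₀ ▸ (H.hp i₀ hi₀1 hi₀l).2
  have hpnn : ∀ i, i ≤ l → 0 ≤ p i := by
    intro i hi
    rcases Nat.eq_zero_or_pos i with h0 | h1
    · rw [h0, H.hp0]
    · exact (H.hp i h1 hi).1.le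
  have hple1 : ∀ i, i ≤ l → p i ≤ 1 := by
    intro i hi
    rcases Nat.eq_zero_or_pos i with h0 | h1
    · rw [h0, H.hp0]; norm_num
    · exact (H.hp i h1 hi).2.le
  have hwle : ∀ i, 1 ≤ i → i ≤ l → ω₁ ^ p i ≤ ω₁ ^ p' :=
    fun i h1 hi => Real.rpow_le_rpow_of_exponent_le hω (hp'max i h1 hi)
  set B : ℝ := Λ₁ * ‖x₀‖ with hBdef
  have hB0 : 0 ≤ B := mul_nonneg (by linarith) (norm_nonneg _)
  set M : ℝ := L * B with hMdef
  have hM0 : 0 ≤ M := mul_nonneg hL.le hB0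
  have hW0 : (0:ℝ) ≤ ω₁ ^ p' := (Real.rpow_pos_of_pos hω0 _).le
  have hW1 : (1:ℝ) ≤ ω₁ ^ p' := Real.one_le_rpow hω hp'pos.le
  have hw0 : (0:ℝ) < ω₁ ^ (p' - 1) := Real.rpow_pos_of_pos hω0 _
  have hw1 : ω₁ ^ (p' - 1) ≤ 1 := Real.rpow_le_one_of_one_le_of_nonpos hω (by linarith)
  -- basic interval facts
  have hsub : ∀ {a b : ℝ}, t₀ ≤ a → b ≤ t₁ → Set.Ioc a b ⊆ Set.Icc t₀ t₁ := by
    intro a b ha hb θ hθ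
    exact ⟨le_trans ha hθ.1.le, le_trans hθ.2 hb⟩
  have hgM : ∀ {g : ℝ → E n → E n}, RegVF L g → ∀ t : ℝ, ∀ s ∈ Set.Icc t₀ t₁, ‖g t (x s)‖ ≤ M := by
    intro g hg t s hs
    exact (normVF_le hg t (x s)).trans (mul_le_mul_of_nonneg_left (hxb s hs) hL.le)
  have hbrM : ∀ i j, i ≤ l → j ≤ l → ∀ t : ℝ, ∀ s ∈ Set.Icc t₀ t₁,
      ‖lieBracket f Df i j t (x s)‖ ≤ 2 * M := by
    intro i j hil hjl t s hs
    rw [lieBracket]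
    refine (norm_sub_le _ _).trans ?_
    have h1 := hgM (H.hreg_Lf j i hjl hil) t s hs
    have h2 := hgM (H.hreg_Lf i j hil hjl) t s hs
    linarith
  have hpair : ∀ i j, 1 ≤ i → i < j → j ≤ l →
      (|gammaCoeff p u i j ω₁| ≤ 2 * π ∨ gammaCoeff p u i j ω₁ = 0 ∨
        ∀ (t : ℝ) (y : E n), lieBracket f Df i j t y = 0) := by
    intro i j hi1 hij hjl
    have hil : i ≤ l := le_trans hij.le hjl
    by_cases hc : p i + p j ≤ 1
    · exact Or.inl (gamma_abs_le hω (H.hubdd i hil) (H.hubdd j hjl) hc)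
    · rcases hIC i j hi1 hil (hi1.trans hij.le) hjl (not_le.mp hc) with hg | hb
      · exact Or.inr (Or.inl (hg ω₁ hω0))
      · exact Or.inr (Or.inr hb)
  -- V bounds
  have hVile : ∀ a b : ℝ, a ≤ b → ∀ i, 1 ≤ i → i ≤ l →
      |Vi u p ω₁ i a b| ≤ ω₁ ^ p' * (b - a) := by
    intro a b hab i hi1 hil
    refine (Vi_abs_le hab hω0 (fun t => H.hubdd i hil t)).trans ?_
    exact mul_le_mul_of_nonneg_right (hwle i hi1 hil) (by linarith)
  have hVijle : ∀ a b : ℝ, a ≤ b → ∀ i j, 1 ≤ i → i ≤ l → 1 ≤ j → j ≤ l →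
      |Vij u p ω₁ i j a b| ≤ (ω₁ ^ p' * (b - a)) ^ 2 := by
    intro a b hab i j hi1 hil hj1 hjl
    refine (Vij_abs_le hab hω0 (fun t => H.hubdd i hil t) (fun t => H.hubdd j hjl t)).trans ?_
    have h1 := hwle i hi1 hil
    have h2 := hwle j hj1 hjl
    have hpi := Real.rpow_nonneg hω0.le (p i)
    have hpj := Real.rpow_nonneg hω0.le (p j)
    have hsq : (0:ℝ) ≤ (b - a) ^ 2 := sq_nonneg _
    have : ω₁ ^ p i * ω₁ ^ p j ≤ ω₁ ^ p' * ω₁ ^ p' :=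
      mul_le_mul h1 h2 hpj hW0
    calc ω₁ ^ p i * ω₁ ^ p j * (b - a) ^ 2 ≤ (ω₁ ^ p' * ω₁ ^ p') * (b - a) ^ 2 :=
          mul_le_mul_of_nonneg_right this hsq
      _ = (ω₁ ^ p' * (b - a)) ^ 2 := by ring
  -- γ • bracket pointwise bound
  have hγbr : ∀ i j, 1 ≤ i → i < j → j ≤ l → ∀ t : ℝ, ∀ s ∈ Set.Icc t₀ t₁,
      ‖gammaCoeff p u i j ω₁ • lieBracket f Df i j t (x s)‖ ≤ 2 * π * (2 * M) := by
    intro i j hi1 hij hjl t s hs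
    rcases hpair i j hi1 hij hjl with h | h | h
    · rw [norm_smul, Real.norm_eq_abs]
      exact mul_le_mul h (hbrM i j (le_trans hij.le hjl) hjl t s hs) (norm_nonneg _)
        (by positivity)
    · rw [h, zero_smul, norm_zero]
      exact mul_nonneg (by positivity) (by linarith)
    · rw [h t (x s), smul_zero, norm_zero]
      exact mul_nonneg (by positivity) (by linarith)
  -- Iterm bound
  have hIb : ∀ a b : ℝ, t₀ ≤ a → a ≤ b → b ≤ t₁ →
      ‖Iterm l f Df u p ω₁ x a b‖ ≤ (l * (l * (2 * π * (2 * M)))) * (b - a) := by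
    intro a b ha hab hb
    have hc0 : (0:ℝ) ≤ 2 * π * (2 * M) := mul_nonneg (by positivity) (by linarith)
    rw [Iterm]
    apply nest_bound hab
    intro θ hθ
    refine mySum_norm_le _ (mul_nonneg (by positivity) hc0) (by simp [Nat.card_Icc]) ?_
    intro i hi
    obtain ⟨hi1, hil⟩ := Finset.mem_Icc.mp hi
    refine mySum_norm_le _ hc0 (by rw [Nat.card_Ioc]; exact_mod_cast Nat.sub_le l i) ?_
    intro j hj
    obtain ⟨hij, hjl⟩ := Finset.mem_Ioc.mp hj
    exact hγbr i j hi1 hij hjl θ θ (hsub ha hb hθ)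
  -- QV1 bound
  have hQV1b : ∀ a b : ℝ, t₀ ≤ a → a ≤ b → b ≤ t₁ →
      ‖QV1 l ft u p ω₁ x a b‖ ≤ l * (ω₁ ^ p' * (M * (b - a) ^ 2)) := by
    intro a b ha hab hb
    rw [QV1]
    refine mySum_norm_le _ (mul_nonneg hW0 (mul_nonneg hM0 (sq_nonneg _)))
      (by simp [Nat.card_Icc]) ?_
    intro i hi
    obtain ⟨hi1, hil⟩ := Finset.mem_Icc.mp hi
    rw [norm_smul, Real.norm_eq_abs, abs_of_nonneg (Real.rpow_nonneg hω0.le _)]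
    have houter := nest2_bound (v1 := fun θ => u i (ω₁ * θ)) (g := fun τ => ft i τ (x τ))
      (C := M) hab hM0 (fun t => H.hubdd i hil _)
      (fun τ hτ => hgM (H.hreg_ft i hil) τ τ (hsub ha hb hτ))
    exact mul_le_mul (hwle i hi1 hil) houter (norm_nonneg _) hW0
  -- QV2 bound
  have hQV2b : ∀ a b : ℝ, t₀ ≤ a → a ≤ b → b ≤ t₁ →
      ‖QV2 l Lft u p ω₁ x a b‖ ≤ l * ((l + 1) * (ω₁ ^ (p' + 1) * (M * (b - a) ^ 3))) := by
    intro a b ha hab hb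
    have hC3 : (0:ℝ) ≤ ω₁ ^ (p' + 1) * (M * (b - a) ^ 3) :=
      mul_nonneg (Real.rpow_nonneg hω0.le _)
        (mul_nonneg hM0 (pow_nonneg (by linarith) 3))
    rw [QV2]
    refine mySum_norm_le _ (mul_nonneg (by positivity) hC3)
      (by rw [Nat.card_Ico]; exact_mod_cast Nat.sub_le l 1) ?_
    intro i hi
    obtain ⟨hi1, hil'⟩ := Finset.mem_Ico.mp hi
    have hil : i ≤ l := hil'.le
    refine mySum_norm_le _ hC3 (by simp [Nat.card_Icc]) ?_
    intro j hj
    have hjl : j ≤ l := (Finset.mem_Icc.mp hj).2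
    rw [norm_smul, Real.norm_eq_abs, abs_of_nonneg (Real.rpow_nonneg hω0.le _)]
    have h3 := nest3_bound (v1 := fun θ => u i (ω₁ * θ)) (v2 := fun τ => u j (ω₁ * τ))
      (g := fun σ => Lft j i σ (x σ)) (C := M) hab hM0
      (fun t => H.hubdd i hil _) (fun t => H.hubdd j hjl _)
      (fun σ hσ => hgM (H.hreg_Lft i j hil hjl) σ σ (hsub ha hb hσ))
    refine mul_le_mul ?_ h3 (norm_nonneg _) (Real.rpow_nonneg hω0.le _)
    refine Real.rpow_le_rpow_of_exponent_le hω ?_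
    have h4 := hp'max i hi1 hil
    have h5 := hple1 j hjl
    linarith
  -- Q1 bound
  have hQ1b : ∀ a b : ℝ, t₀ ≤ a → a ≤ b → b ≤ t₁ →
      ‖Q1 l f Df u p ω₁ x a b‖ ≤ l * (ω₁ ^ p' * ((b - a) ^ 2 * M)) := by
    intro a b ha hab hb
    have haI : a ∈ Set.Icc t₀ t₁ := ⟨ha, hab.trans hb⟩
    rw [Q1]
    refine mySum_norm_le _ (mul_nonneg hW0 (mul_nonneg (sq_nonneg _) hM0))
      (by simp [Nat.card_Icc]) ?_
    intro i hi
    obtain ⟨hi1, hil⟩ := Finset.mem_Icc.mp hi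
    rw [norm_smul, Real.norm_eq_abs]
    have hV := Vij_abs_le (i := i) (j := 0) (u := u) (p := p) (ω := ω₁) (a := a) (b := b)
      hab hω0 (fun t => H.hubdd i hil t) (fun t => H.hubdd 0 (Nat.zero_le l) t)
    rw [H.hp0, Real.rpow_zero, mul_one] at hV
    have hLD := hgM (H.hreg_Lf i 0 hil (Nat.zero_le l)) a a haI
    have h6 : |Vij u p ω₁ i 0 a b| * ‖lieDeriv f Df 0 i a (x a)‖
        ≤ (ω₁ ^ p i * (b - a) ^ 2) * M :=
      mul_le_mul hV hLD (norm_nonneg _)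
        (mul_nonneg (Real.rpow_nonneg hω0.le _) (sq_nonneg _))
    refine h6.trans ?_
    nlinarith [mul_nonneg (sub_nonneg.mpr (hwle i hi1 hil)) (mul_nonneg (sq_nonneg (b - a)) hM0)]
  -- Q1T bound
  have hQ1Tb : ∀ a b : ℝ, t₀ ≤ a → a ≤ b → b ≤ t₁ →
      ‖Q1T l f Df u p ω₁ x a b‖ ≤
        l * (l * ((ω₁ ^ p' * (b - a)) ^ 2 * M)) + (1/2) * (l * ((ω₁ ^ p' * (b - a)) ^ 2 * M)) := by
    intro a b ha hab hb
    have haI : a ∈ Set.Icc t₀ t₁ := ⟨ha, hab.trans hb⟩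
    have hC : (0:ℝ) ≤ (ω₁ ^ p' * (b - a)) ^ 2 * M := mul_nonneg (sq_nonneg _) hM0
    rw [Q1T]
    refine (norm_add_le _ _).trans (add_le_add ?_ ?_)
    · refine mySum_norm_le _ (mul_nonneg (by positivity) hC) (by simp [Nat.card_Icc]) ?_
      intro i hi
      obtain ⟨hi1, hil⟩ := Finset.mem_Icc.mp hi
      refine mySum_norm_le _ hC (by rw [Nat.card_Ioc]; exact_mod_cast Nat.sub_le l i) ?_
      intro j hj
      obtain ⟨hij, hjl⟩ := Finset.mem_Ioc.mp hj
      rw [norm_smul, Real.norm_eq_abs, abs_mul]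
      have h1 := hVile a b hab i hi1 hil
      have h2 := hVile a b hab j (hi1.trans hij.le) hjl
      have hLD := hgM (H.hreg_Lf i j hil hjl) a a haI
      have hWb : (0:ℝ) ≤ ω₁ ^ p' * (b - a) := le_trans (abs_nonneg _) h1
      calc |Vi u p ω₁ i a b| * |Vi u p ω₁ j a b| * ‖lieDeriv f Df j i a (x a)‖
          ≤ ((ω₁ ^ p' * (b - a)) * (ω₁ ^ p' * (b - a))) * M :=
            mul_le_mul (mul_le_mul h1 h2 (abs_nonneg _) hWb) hLD (norm_nonneg _)
              (mul_nonneg hWb hWb)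
        _ = (ω₁ ^ p' * (b - a)) ^ 2 * M := by ring
    · rw [norm_smul, Real.norm_eq_abs, abs_of_nonneg (by norm_num : (0:ℝ) ≤ 1/2)]
      refine mul_le_mul_of_nonneg_left ?_ (by norm_num)
      refine mySum_norm_le _ hC (by simp [Nat.card_Icc]) ?_
      intro i hi
      obtain ⟨hi1, hil⟩ := Finset.mem_Icc.mp hi
      rw [norm_smul, Real.norm_eq_abs, abs_pow]
      have h1 := hVile a b hab i hi1 hil
      have hLD := hgM (H.hreg_Lf i i hil hil) a a haI
      exact mul_le_mul (pow_le_pow_left₀ (abs_nonneg _) h1 2) hLD (norm_nonneg _) (sq_nonneg _)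
  -- Hterm bound
  have hHb : ∀ a b : ℝ, t₀ ≤ a → a ≤ b → b ≤ t₁ →
      ‖Hterm l f Df u p ω₁ x a b‖ ≤
        l * ((ω₁ ^ p' * (b - a)) * M) + l * (l * ((ω₁ ^ p' * (b - a)) ^ 2 * (2 * M))) := by
    intro a b ha hab hb
    have haI : a ∈ Set.Icc t₀ t₁ := ⟨ha, hab.trans hb⟩
    have hba : (0:ℝ) ≤ b - a := by linarith
    have hWb : (0:ℝ) ≤ ω₁ ^ p' * (b - a) := mul_nonneg hW0 hba
    rw [Hterm]
    refine (norm_add_le _ _).trans (add_le_add ?_ ?_)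
    · refine mySum_norm_le _ (mul_nonneg hWb hM0) (by simp [Nat.card_Icc]) ?_
      intro i hi
      obtain ⟨hi1, hil⟩ := Finset.mem_Icc.mp hi
      rw [norm_smul, Real.norm_eq_abs]
      exact mul_le_mul (hVile a b hab i hi1 hil) (hgM (H.hreg_f i hil) a a haI)
        (norm_nonneg _) hWb
    · have hC2 : (0:ℝ) ≤ (ω₁ ^ p' * (b - a)) ^ 2 * (2 * M) :=
        mul_nonneg (sq_nonneg _) (by linarith)
      refine mySum_norm_le _ (mul_nonneg (by positivity) hC2) (by simp [Nat.card_Icc]) ?_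
      intro i hi
      obtain ⟨hi1, hil⟩ := Finset.mem_Icc.mp hi
      refine mySum_norm_le _ hC2 (by rw [Nat.card_Ioc]; exact_mod_cast Nat.sub_le l i) ?_
      intro j hj
      obtain ⟨hij, hjl⟩ := Finset.mem_Ioc.mp hj
      rw [norm_smul, Real.norm_eq_abs]
      exact mul_le_mul (hVijle a b hab j i (hi1.trans hij.le) hjl hi1 hil)
        (hbrM i j hil hjl a a haI) (norm_nonneg _) (sq_nonneg _)
  -- the solution increment bound
  set G : ℝ → E n := fun τ => f 0 τ (x τ) +
    ∑ i ∈ Finset.Icc 1 l, (ω₁ ^ p i * u i (ω₁ * τ)) • f i τ (x τ) with hGdef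
  have hxcont : ContinuousOn x (Set.Icc t₀ t₁) := hsol.1
  have hfc : ∀ i, i ≤ l → ContinuousOn (fun τ => f i τ (x τ)) (Set.Icc t₀ t₁) :=
    fun i hi => contOn_comp (H.hreg_f i hi) hxcont
  have hGb : ∀ τ ∈ Set.Icc t₀ t₁, ‖G τ‖ ≤ (1 + l * ω₁ ^ p') * M := by
    intro τ hτ
    rw [hGdef]
    refine (norm_add_le _ _).trans ?_
    have h1 : ‖f 0 τ (x τ)‖ ≤ M := hgM (H.hreg_f 0 (Nat.zero_le l)) τ τ hτ
    have h2 : ‖∑ i ∈ Finset.Icc 1 l, (ω₁ ^ p i * u i (ω₁ * τ)) • f i τ (x τ)‖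
        ≤ l * (ω₁ ^ p' * M) := by
      refine mySum_norm_le _ (mul_nonneg hW0 hM0) (by simp [Nat.card_Icc]) ?_
      intro i hi
      obtain ⟨hi1, hil⟩ := Finset.mem_Icc.mp hi
      rw [norm_smul, Real.norm_eq_abs, abs_mul, abs_of_nonneg (Real.rpow_nonneg hω0.le _)]
      have hu1 : ω₁ ^ p i * |u i (ω₁ * τ)| ≤ ω₁ ^ p' :=
        le_trans (mul_le_mul_of_nonneg_left (H.hubdd i hil _) (Real.rpow_nonneg hω0.le _))
          (by rw [mul_one]; exact hwle i hi1 hil)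
      exact mul_le_mul hu1 (hgM (H.hreg_f i hil) τ τ hτ) (norm_nonneg _) hW0
    have : M + l * (ω₁ ^ p' * M) = (1 + l * ω₁ ^ p') * M := by ring
    linarith
  have hGint : ∀ c, t₀ ≤ c → c ≤ t₁ → IntervalIntegrable G volume t₀ c := by
    intro c hc1 hc2
    rw [intervalIntegrable_iff_integrableOn_Ioc_of_le hc1]
    have hIoc : Set.Ioc t₀ c ⊆ Set.Icc t₀ t₁ := fun θ hθ => ⟨hθ.1.le, hθ.2.trans hc2⟩
    rw [hGdef]
    apply MeasureTheory.Integrable.add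
    · have hcont : ContinuousOn (fun τ => f 0 τ (x τ)) (Set.Icc t₀ c) :=
        (hfc 0 (Nat.zero_le l)).mono (Set.Icc_subset_Icc_right hc2)
      exact (hcont.integrableOn_Icc).mono_set Set.Ioc_subset_Icc_self
    · apply MeasureTheory.integrable_finset_sum
      intro i hi
      obtain ⟨hi1, hil⟩ := Finset.mem_Icc.mp hi
      have hmeas : AEStronglyMeasurable (fun τ => (ω₁ ^ p i * u i (ω₁ * τ)) • f i τ (x τ))
          (volume.restrict (Set.Ioc t₀ c)) := by
        refine AEStronglyMeasurable.smul (f := fun τ => ω₁ ^ p i * u i (ω₁ * τ))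
          (g := fun τ => f i τ (x τ)) ?_ ?_
        · exact (((H.humeas i hil).comp (measurable_id.const_mul ω₁)).const_mul
            (ω₁ ^ p i)).aestronglyMeasurable
        · exact ((hfc i hil).mono hIoc).aestronglyMeasurable measurableSet_Ioc
      refine MeasureTheory.Integrable.mono' (g := fun _ => ω₁ ^ p' * M)
        (MeasureTheory.integrableOn_const measure_Ioc_lt_top.ne) hmeas ?_
      filter_upwards [MeasureTheory.ae_restrict_mem measurableSet_Ioc] with τ hτ
      rw [norm_smul, Real.norm_eq_abs, abs_mul, abs_of_nonneg (Real.rpow_nonneg hω0.le _)]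
      have hu1 : ω₁ ^ p i * |u i (ω₁ * τ)| ≤ ω₁ ^ p' :=
        le_trans (mul_le_mul_of_nonneg_left (H.hubdd i hil _) (Real.rpow_nonneg hω0.le _))
          (by rw [mul_one]; exact hwle i hi1 hil)
      exact mul_le_mul hu1 (hgM (H.hreg_f i hil) τ τ (hIoc hτ)) (norm_nonneg _) hW0
  set Cx : ℝ := (1 + l * ω₁ ^ p') * M with hCxdef
  have hCx0 : 0 ≤ Cx := by
    rw [hCxdef]
    refine mul_nonneg ?_ hM0
    have : (0:ℝ) ≤ l * ω₁ ^ p' := mul_nonneg (by positivity) hW0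
    linarith
  have hxinc : ∀ a θ : ℝ, t₀ ≤ a → a ≤ θ → θ ≤ t₁ → ‖x θ - x a‖ ≤ Cx * (θ - a) := by
    intro a θ ha haθ hθ
    have h1 := hsol.2 θ ⟨ha.trans haθ, hθ⟩
    have h2 := hsol.2 a ⟨ha, haθ.trans hθ⟩
    have hdiff : x θ - x a = ∫ τ in a..θ, G τ := by
      rw [h1, h2, add_sub_add_left_eq_sub]
      exact intervalIntegral.integral_interval_sub_left
        (hGint θ (ha.trans haθ) hθ) (hGint a ha (haθ.trans hθ))
    rw [hdiff, hCxdef]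
    apply nest_bound haθ
    intro τ hτ
    exact hGb τ (hsub ha hθ hτ)
  -- Lie derivative time-space difference bound
  have hLDdiff : ∀ i j, i ≤ l → j ≤ l → ∀ a θ : ℝ, t₀ ≤ a → a ≤ θ → θ ≤ t₁ →
      ‖lieDeriv f Df j i a (x a) - lieDeriv f Df j i θ (x θ)‖ ≤ (M + L * Cx) * (θ - a) := by
    intro i j hil hjl a θ ha haθ hθ
    have haI : a ∈ Set.Icc t₀ t₁ := ⟨ha, haθ.trans hθ⟩
    have h1 : ‖lieDeriv f Df j i a (x a) - lieDeriv f Df j i θ (x a)‖ ≤ M * (θ - a) := by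
      have hlip := lip_time (g := fun s => lieDeriv f Df j i s (x a))
        (g' := fun s => Lft j i s (x a)) (H.hLft i j hil hjl (x a))
        (fun s => (normVF_le (H.hreg_Lft i j hil hjl) s (x a)).trans
          (mul_le_mul_of_nonneg_left (hxb a haI) hL.le)) θ a
      rw [abs_of_nonpos (by linarith)] at hlip
      have he : L * B * -(a - θ) = M * (θ - a) := by rw [hMdef]; ring
      linarith [hlip]
    have h2 : ‖lieDeriv f Df j i θ (x a) - lieDeriv f Df j i θ (x θ)‖ ≤ L * (Cx * (θ - a)) := by
      refine ((H.hreg_Lf i j hil hjl).2.1 θ (x a) (x θ)).trans ?_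
      refine mul_le_mul_of_nonneg_left ?_ hL.le
      rw [norm_sub_rev]
      exact hxinc a θ ha haθ hθ
    calc ‖lieDeriv f Df j i a (x a) - lieDeriv f Df j i θ (x θ)‖
        ≤ ‖lieDeriv f Df j i a (x a) - lieDeriv f Df j i θ (x a)‖ +
          ‖lieDeriv f Df j i θ (x a) - lieDeriv f Df j i θ (x θ)‖ :=
          norm_sub_le_norm_sub_add_norm_sub _ _ _
      _ ≤ M * (θ - a) + L * (Cx * (θ - a)) := add_le_add h1 h2
      _ = (M + L * Cx) * (θ - a) := by ring
  have hbrdiff : ∀ i j, i ≤ l → j ≤ l → ∀ a θ : ℝ, t₀ ≤ a → a ≤ θ → θ ≤ t₁ →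
      ‖lieBracket f Df i j a (x a) - lieBracket f Df i j θ (x θ)‖
        ≤ (2 * (M + L * Cx)) * (θ - a) := by
    intro i j hil hjl a θ ha haθ hθ
    have hrw : lieBracket f Df i j a (x a) - lieBracket f Df i j θ (x θ)
        = (lieDeriv f Df i j a (x a) - lieDeriv f Df i j θ (x θ))
          - (lieDeriv f Df j i a (x a) - lieDeriv f Df j i θ (x θ)) := by
      rw [lieBracket, lieBracket]; abel
    rw [hrw]
    refine (norm_sub_le _ _).trans ?_
    have h1 := hLDdiff j i hjl hil a θ ha haθ hθ
    have h2 := hLDdiff i j hil hjl a θ ha haθ hθ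
    linarith
  -- RL1 bound
  have hRL1b : ∀ a b : ℝ, t₀ ≤ a → a ≤ b → b ≤ t₁ →
      ‖RL1 l f Df u p ω₁ x a b‖
        ≤ l * (l * (2 * π * ((2 * (M + L * Cx)) * (b - a) ^ 2))) := by
    intro a b ha hab hb
    have hMC : (0:ℝ) ≤ 2 * (M + L * Cx) := by
      have := mul_nonneg hL.le hCx0
      linarith
    have hc0 : (0:ℝ) ≤ 2 * π * ((2 * (M + L * Cx)) * (b - a) ^ 2) :=
      mul_nonneg (by positivity) (mul_nonneg hMC (sq_nonneg _))
    rw [RL1]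
    refine mySum_norm_le _ (mul_nonneg (by positivity) hc0) (by simp [Nat.card_Icc]) ?_
    intro i hi
    obtain ⟨hi1, hil⟩ := Finset.mem_Icc.mp hi
    refine mySum_norm_le _ hc0 (by rw [Nat.card_Ioc]; exact_mod_cast Nat.sub_le l i) ?_
    intro j hj
    obtain ⟨hij, hjl⟩ := Finset.mem_Ioc.mp hj
    rcases hpair i j hi1 hij hjl with h | h | h
    · rw [norm_smul, Real.norm_eq_abs]
      have hint : ‖∫ θ in a..b, (lieBracket f Df i j a (x a) - lieBracket f Df i j θ (x θ))‖
          ≤ ((2 * (M + L * Cx)) * (b - a)) * (b - a) := by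
        apply nest_bound hab
        intro θ hθ
        refine (hbrdiff i j hil hjl a θ ha hθ.1.le (hθ.2.trans hb)).trans ?_
        exact mul_le_mul_of_nonneg_left (by linarith [hθ.2]) hMC
      calc |gammaCoeff p u i j ω₁| *
            ‖∫ θ in a..b, (lieBracket f Df i j a (x a) - lieBracket f Df i j θ (x θ))‖
          ≤ (2 * π) * (((2 * (M + L * Cx)) * (b - a)) * (b - a)) :=
            mul_le_mul h hint (norm_nonneg _) (by positivity)
        _ = 2 * π * ((2 * (M + L * Cx)) * (b - a) ^ 2) := by ring
    · rw [h, zero_smul, norm_zero]; exact hc0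
    · simp only [h, sub_self, intervalIntegral.integral_zero, smul_zero, norm_zero]
      exact hc0
  -- time grid
  set T₁ : ℝ := 2 * π / ω₁ with hT₁def
  set r : ℕ := ⌊(t₁ - t₀) / T₁⌋₊ with hrdef
  set tq : ℕ → ℝ := fun q => t₀ + (q : ℝ) * T₁ with htqdef
  have hπ : (0:ℝ) < π := Real.pi_pos
  have hT₁pos : 0 < T₁ := by rw [hT₁def]; positivity
  have hT₁2π : T₁ ≤ 2 * π := by rw [hT₁def]; exact div_le_self (by positivity) hω
  have hrT : (r : ℝ) * T₁ ≤ t₁ - t₀ := by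
    have h0 : 0 ≤ (t₁ - t₀) / T₁ := div_nonneg (by linarith) hT₁pos.le
    have h1 := Nat.floor_le h0
    calc (r : ℝ) * T₁ ≤ ((t₁ - t₀) / T₁) * T₁ := by
          exact mul_le_mul_of_nonneg_right (by rw [hrdef]; exact h1) hT₁pos.le
      _ = t₁ - t₀ := by field_simp
  have htqr1 : t₀ ≤ tq r := by
    rw [htqdef]
    have : (0:ℝ) ≤ (r : ℝ) * T₁ := mul_nonneg (Nat.cast_nonneg r) hT₁pos.le
    simp only []
    linarith
  have htqr2 : tq r ≤ t₁ := by
    rw [htqdef]; simp only []; linarith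
  have htail : t₁ - tq r ≤ T₁ := by
    have h1 := Nat.lt_floor_add_one ((t₁ - t₀) / T₁)
    have h2 : t₁ - t₀ < ((r:ℝ) + 1) * T₁ := by
      have h3 : (t₁ - t₀) = ((t₁ - t₀)/T₁) * T₁ := by field_simp
      calc t₁ - t₀ = ((t₁ - t₀)/T₁) * T₁ := h3
        _ < ((r:ℝ) + 1) * T₁ := by
            refine mul_lt_mul_of_pos_right ?_ hT₁pos
            rw [hrdef]; exact h1
    have h4 : ((r:ℝ) + 1) * T₁ = (r:ℝ) * T₁ + T₁ := by ring
    rw [htqdef]; simp only []; linarith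
  -- rpow identities
  have hWT : ω₁ ^ p' * T₁ = 2 * π * ω₁ ^ (p' - 1) := by
    rw [hT₁def, Real.rpow_sub hω0, Real.rpow_one]
    field_simp
  have hω1T : ω₁ * T₁ = 2 * π := by rw [hT₁def]; field_simp
  have hWp1 : ω₁ ^ (p' + 1) = ω₁ ^ p' * ω₁ := by
    rw [Real.rpow_add hω0, Real.rpow_one]
  have hT1w : T₁ ≤ 2 * π * ω₁ ^ (p' - 1) := by
    have h1 : ω₁ ^ (-1:ℝ) ≤ ω₁ ^ (p' - 1) :=
      Real.rpow_le_rpow_of_exponent_le hω (by linarith)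
    have h2 : T₁ = 2 * π * ω₁ ^ (-1:ℝ) := by
      rw [hT₁def, Real.rpow_neg_one]; ring
    calc T₁ = 2 * π * ω₁ ^ (-1:ℝ) := h2
      _ ≤ 2 * π * ω₁ ^ (p' - 1) := by
          refine mul_le_mul_of_nonneg_left h1 (by positivity)
  -- constants
  have hlc : (0:ℝ) ≤ (l:ℝ) := Nat.cast_nonneg l
  have hLl : (0:ℝ) ≤ 1 + L + L * l := by
    have := mul_nonneg hL.le hlc
    linarith
  have hMCx : M + L * Cx ≤ (1 + L + L * l) * (M * ω₁ ^ p') := by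
    rw [hCxdef]
    have hMW : M ≤ M * (ω₁ ^ p') := le_mul_of_one_le_right hM0 hW1
    have hLMW : L * M ≤ L * (M * ω₁ ^ p') := mul_le_mul_of_nonneg_left hMW hL.le
    have e : (1 + L + L * (l:ℝ)) * (M * ω₁ ^ p')
        = M * ω₁ ^ p' + L * (M * ω₁ ^ p') + L * (l:ℝ) * (M * ω₁ ^ p') := by ring
    have e2 : M + L * ((1 + (l:ℝ) * ω₁ ^ p') * M)
        = M + L * M + L * (l:ℝ) * (M * ω₁ ^ p') := by ring
    linarith
  -- per-window bound
  have hwin : ∀ q ∈ Finset.range r,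
      ‖QV1 l ft u p ω₁ x (tq q) (tq (q+1)) + QV2 l Lft u p ω₁ x (tq q) (tq (q+1))
        + Q1 l f Df u p ω₁ x (tq q) (tq (q+1)) + RL1 l f Df u p ω₁ x (tq q) (tq (q+1))‖
      ≤ (4*π*l + 4*π^2*l*(l+1) + 8*π^2*l^2*(1+L+L*l)) * (M * (ω₁ ^ (p'-1) * T₁)) := by
    intro q hq
    have hq' := Finset.mem_range.mp hq
    have hq1 : (q:ℝ) + 1 ≤ (r:ℝ) := by exact_mod_cast Nat.succ_le_of_lt hq'
    have ha : t₀ ≤ tq q := by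
      rw [htqdef]; simp only []
      have : (0:ℝ) ≤ (q : ℝ) * T₁ := mul_nonneg (Nat.cast_nonneg q) hT₁pos.le
      linarith
    have hab : tq q ≤ tq (q+1) := by
      rw [htqdef]; simp only []
      push_cast
      nlinarith [hT₁pos]
    have hb : tq (q+1) ≤ t₁ := by
      rw [htqdef]; simp only []
      push_cast
      have h5 : ((q:ℝ) + 1) * T₁ ≤ (r:ℝ) * T₁ := mul_le_mul_of_nonneg_right hq1 hT₁pos.le
      nlinarith [hrT]
    have hd : tq (q+1) - tq q = T₁ := by rw [htqdef]; simp only []; push_cast; ring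
    have b1 := hQV1b _ _ ha hab hb
    have b2 := hQV2b _ _ ha hab hb
    have b3 := hQ1b _ _ ha hab hb
    have b4 := hRL1b _ _ ha hab hb
    rw [hd] at b1 b2 b3 b4
    have e1 : (l:ℝ) * (ω₁ ^ p' * (M * T₁^2)) = 2*π*l * (M * (ω₁ ^ (p'-1) * T₁)) := by
      linear_combination ((l:ℝ) * M * T₁) * hWT
    have e2 : (l:ℝ) * (((l:ℝ)+1) * (ω₁ ^ (p'+1) * (M * T₁^3)))
        = 4*π^2*l*(l+1) * (M * (ω₁ ^ (p'-1) * T₁)) := by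
      linear_combination ((l:ℝ)*((l:ℝ)+1)*M*T₁^3) * hWp1
        + ((l:ℝ)*((l:ℝ)+1)*M*T₁^2*ω₁) * hWT
        + ((l:ℝ)*((l:ℝ)+1)*2*π*(ω₁ ^ (p'-1))*M*T₁) * hω1T
    have e3 : (l:ℝ) * (ω₁ ^ p' * (T₁^2 * M)) = 2*π*l * (M * (ω₁ ^ (p'-1) * T₁)) := by
      linear_combination ((l:ℝ) * M * T₁) * hWT
    have e4 : (l:ℝ) * ((l:ℝ) * (2*π*((2*(M + L*Cx))*T₁^2)))
        ≤ 8*π^2*l^2*(1+L+L*l) * (M * (ω₁ ^ (p'-1) * T₁)) := by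
      calc (l:ℝ) * ((l:ℝ) * (2*π*((2*(M + L*Cx))*T₁^2)))
          = (4*π*(l:ℝ)^2*T₁^2) * (M + L*Cx) := by ring
        _ ≤ (4*π*(l:ℝ)^2*T₁^2) * ((1+L+L*l) * (M * ω₁ ^ p')) :=
            mul_le_mul_of_nonneg_left hMCx (by positivity)
        _ = 8*π^2*l^2*(1+L+L*l) * (M * (ω₁ ^ (p'-1) * T₁)) := by
            linear_combination (4*π*(l:ℝ)^2*T₁*(1+L+L*l)*M) * hWT
    have hnc := norm_add4 (QV1 l ft u p ω₁ x (tq q) (tq (q+1)))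
      (QV2 l Lft u p ω₁ x (tq q) (tq (q+1))) (Q1 l f Df u p ω₁ x (tq q) (tq (q+1)))
      (RL1 l f Df u p ω₁ x (tq q) (tq (q+1)))
    linarith
  -- tail interval facts
  have hS0 : (0:ℝ) ≤ t₁ - tq r := by linarith
  have hWS : ω₁ ^ p' * (t₁ - tq r) ≤ 2 * π * ω₁ ^ (p' - 1) := by
    calc ω₁ ^ p' * (t₁ - tq r) ≤ ω₁ ^ p' * T₁ := mul_le_mul_of_nonneg_left htail hW0
      _ = 2 * π * ω₁ ^ (p' - 1) := hWT
  have hωS : ω₁ * (t₁ - tq r) ≤ 2 * π := by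
    calc ω₁ * (t₁ - tq r) ≤ ω₁ * T₁ := mul_le_mul_of_nonneg_left htail hω0.le
      _ = 2 * π := hω1T
  have hS2π : t₁ - tq r ≤ 2 * π := htail.trans hT₁2π
  have h2πw0 : (0:ℝ) ≤ 2 * π * ω₁ ^ (p' - 1) := mul_nonneg (by positivity) hw0.le
  have hWS0 : (0:ℝ) ≤ ω₁ ^ p' * (t₁ - tq r) := mul_nonneg hW0 hS0
  have hWS2 : (ω₁ ^ p' * (t₁ - tq r)) ^ 2 ≤ 4 * π ^ 2 * ω₁ ^ (p' - 1) := by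
    have h := mul_le_mul hWS hWS hWS0 h2πw0
    calc (ω₁ ^ p' * (t₁ - tq r)) ^ 2
        = (ω₁ ^ p' * (t₁ - tq r)) * (ω₁ ^ p' * (t₁ - tq r)) := sq (ω₁ ^ p' * (t₁ - tq r))
      _ ≤ (2 * π * ω₁ ^ (p' - 1)) * (2 * π * ω₁ ^ (p' - 1)) := h
      _ = (4 * π ^ 2) * (ω₁ ^ (p' - 1) * ω₁ ^ (p' - 1)) := by ring
      _ ≤ (4 * π ^ 2) * (ω₁ ^ (p' - 1) * 1) :=
          mul_le_mul_of_nonneg_left (mul_le_mul_of_nonneg_left hw1 hw0.le) (by positivity)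
      _ = 4 * π ^ 2 * ω₁ ^ (p' - 1) := by ring
  -- tail bounds
  have tI : ‖Iterm l f Df u p ω₁ x (tq r) t₁‖ ≤ 8*π^2*l^2*(M*ω₁^(p'-1)) := by
    refine (hIb _ _ htqr1 htqr2 le_rfl).trans ?_
    have h4 : (0:ℝ) ≤ 4*π*(l:ℝ)^2*M := mul_nonneg (by positivity) hM0
    calc (l:ℝ) * ((l:ℝ) * (2*π*(2*M))) * (t₁ - tq r)
        = (4*π*(l:ℝ)^2*M) * (t₁ - tq r) := by ring
      _ ≤ (4*π*(l:ℝ)^2*M) * (2*π*ω₁^(p'-1)) :=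
          mul_le_mul_of_nonneg_left (htail.trans hT1w) h4
      _ = 8*π^2*l^2*(M*ω₁^(p'-1)) := by ring
  have tQV1 : ‖QV1 l ft u p ω₁ x (tq r) t₁‖ ≤ 4*π^2*l*(M*ω₁^(p'-1)) := by
    refine (hQV1b _ _ htqr1 htqr2 le_rfl).trans ?_
    calc (l:ℝ) * (ω₁^p' * (M * (t₁ - tq r)^2))
        = ((l:ℝ)*M) * ((ω₁^p'*(t₁ - tq r)) * (t₁ - tq r)) := by ring
      _ ≤ ((l:ℝ)*M) * ((2*π*ω₁^(p'-1)) * (2*π)) := by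
          refine mul_le_mul_of_nonneg_left ?_ (mul_nonneg hlc hM0)
          exact mul_le_mul hWS hS2π hS0 h2πw0
      _ = 4*π^2*l*(M*ω₁^(p'-1)) := by ring
  have tQV2 : ‖QV2 l Lft u p ω₁ x (tq r) t₁‖ ≤ 8*π^3*l*(l+1)*(M*ω₁^(p'-1)) := by
    refine (hQV2b _ _ htqr1 htqr2 le_rfl).trans ?_
    calc (l:ℝ) * (((l:ℝ)+1) * (ω₁^(p'+1) * (M * (t₁ - tq r)^3)))
        = ((l:ℝ)*((l:ℝ)+1)*M) * ((ω₁^p'*(t₁ - tq r)) * ((ω₁*(t₁ - tq r)) * (t₁ - tq r))) := by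
          rw [hWp1]; ring
      _ ≤ ((l:ℝ)*((l:ℝ)+1)*M) * ((2*π*ω₁^(p'-1)) * ((2*π) * (2*π))) := by
          refine mul_le_mul_of_nonneg_left ?_ (mul_nonneg (mul_nonneg hlc (by linarith)) hM0)
          refine mul_le_mul hWS ?_ (mul_nonneg (mul_nonneg hω0.le hS0) hS0) h2πw0
          exact mul_le_mul hωS hS2π hS0 (by positivity)
      _ = 8*π^3*l*(l+1)*(M*ω₁^(p'-1)) := by ring
  have tQ1 : ‖Q1 l f Df u p ω₁ x (tq r) t₁‖ ≤ 4*π^2*l*(M*ω₁^(p'-1)) := by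
    refine (hQ1b _ _ htqr1 htqr2 le_rfl).trans ?_
    calc (l:ℝ) * (ω₁^p' * ((t₁ - tq r)^2 * M))
        = ((l:ℝ)*M) * ((ω₁^p'*(t₁ - tq r)) * (t₁ - tq r)) := by ring
      _ ≤ ((l:ℝ)*M) * ((2*π*ω₁^(p'-1)) * (2*π)) := by
          refine mul_le_mul_of_nonneg_left ?_ (mul_nonneg hlc hM0)
          exact mul_le_mul hWS hS2π hS0 h2πw0
      _ = 4*π^2*l*(M*ω₁^(p'-1)) := by ring
  have tQ1T : ‖Q1T l f Df u p ω₁ x (tq r) t₁‖ ≤ 4*π^2*((l:ℝ)^2+(l:ℝ))*(M*ω₁^(p'-1)) := by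
    refine (hQ1Tb _ _ htqr1 htqr2 le_rfl).trans ?_
    have hZ : (ω₁^p'*(t₁ - tq r))^2 * M ≤ (4*π^2*ω₁^(p'-1)) * M :=
      mul_le_mul_of_nonneg_right hWS2 hM0
    have c1 : (l:ℝ)*((l:ℝ)*((ω₁^p'*(t₁ - tq r))^2*M))
        ≤ (l:ℝ)*((l:ℝ)*((4*π^2*ω₁^(p'-1))*M)) :=
      mul_le_mul_of_nonneg_left (mul_le_mul_of_nonneg_left hZ hlc) hlc
    have c2 : (1/2:ℝ)*((l:ℝ)*((ω₁^p'*(t₁ - tq r))^2*M))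
        ≤ (1/2:ℝ)*((l:ℝ)*((4*π^2*ω₁^(p'-1))*M)) :=
      mul_le_mul_of_nonneg_left (mul_le_mul_of_nonneg_left hZ hlc) (by norm_num)
    have e : (l:ℝ)*((l:ℝ)*((4*π^2*ω₁^(p'-1))*M)) + (1/2:ℝ)*((l:ℝ)*((4*π^2*ω₁^(p'-1))*M))
        ≤ 4*π^2*((l:ℝ)^2+(l:ℝ))*(M*ω₁^(p'-1)) := by
      have e' : 4*π^2*((l:ℝ)^2+(l:ℝ))*(M*ω₁^(p'-1))
          - ((l:ℝ)*((l:ℝ)*((4*π^2*ω₁^(p'-1))*M)) + (1/2:ℝ)*((l:ℝ)*((4*π^2*ω₁^(p'-1))*M)))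
          = (2*π^2)*((l:ℝ)*(M*ω₁^(p'-1))) := by ring
      have e'' : (0:ℝ) ≤ (2*π^2)*((l:ℝ)*(M*ω₁^(p'-1))) :=
        mul_nonneg (by positivity) (mul_nonneg hlc (mul_nonneg hM0 hw0.le))
      linarith
    exact le_trans (add_le_add c1 c2) e
  have tH : ‖Hterm l f Df u p ω₁ x (tq r) t₁‖
      ≤ 2*π*l*(M*ω₁^(p'-1)) + 8*π^2*l^2*(M*ω₁^(p'-1)) := by
    refine (hHb _ _ htqr1 htqr2 le_rfl).trans ?_
    have c1 : (l:ℝ)*((ω₁^p'*(t₁ - tq r))*M) ≤ (l:ℝ)*((2*π*ω₁^(p'-1))*M) :=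
      mul_le_mul_of_nonneg_left (mul_le_mul_of_nonneg_right hWS hM0) hlc
    have hZ2 : (ω₁^p'*(t₁ - tq r))^2*(2*M) ≤ (4*π^2*ω₁^(p'-1))*(2*M) :=
      mul_le_mul_of_nonneg_right hWS2 (by linarith)
    have c2 : (l:ℝ)*((l:ℝ)*((ω₁^p'*(t₁ - tq r))^2*(2*M)))
        ≤ (l:ℝ)*((l:ℝ)*((4*π^2*ω₁^(p'-1))*(2*M))) :=
      mul_le_mul_of_nonneg_left (mul_le_mul_of_nonneg_left hZ2 hlc) hlc
    have e1 : (l:ℝ)*((2*π*ω₁^(p'-1))*M) = 2*π*l*(M*ω₁^(p'-1)) := by ring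
    have e2 : (l:ℝ)*((l:ℝ)*((4*π^2*ω₁^(p'-1))*(2*M))) = 8*π^2*l^2*(M*ω₁^(p'-1)) := by ring
    linarith
  -- sum over windows
  have hKW0 : (0:ℝ) ≤ 4*π*l + 4*π^2*l*(l+1) + 8*π^2*l^2*(1+L+L*l) := by
    have a1 : (0:ℝ) ≤ 4*π*(l:ℝ) := by positivity
    have a2 : (0:ℝ) ≤ 4*π^2*(l:ℝ)*((l:ℝ)+1) := by positivity
    have a3 : (0:ℝ) ≤ 8*π^2*(l:ℝ)^2*(1+L+L*(l:ℝ)) := mul_nonneg (by positivity) hLl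
    linarith
  have hSnorm : ‖∑ q ∈ Finset.range r,
        (QV1 l ft u p ω₁ x (tq q) (tq (q+1)) + QV2 l Lft u p ω₁ x (tq q) (tq (q+1))
          + Q1 l f Df u p ω₁ x (tq q) (tq (q+1)) + RL1 l f Df u p ω₁ x (tq q) (tq (q+1)))‖
      ≤ (r:ℝ) * ((4*π*l + 4*π^2*l*(l+1) + 8*π^2*l^2*(1+L+L*l)) * (M * (ω₁^(p'-1) * T₁))) :=
    mySum_norm_le _ (mul_nonneg hKW0 (mul_nonneg hM0 (mul_nonneg hw0.le hT₁pos.le)))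
      (by simp) hwin
  have hSfin : (r:ℝ) * ((4*π*l + 4*π^2*l*(l+1) + 8*π^2*l^2*(1+L+L*l)) * (M * (ω₁^(p'-1) * T₁)))
      ≤ ((4*π*l + 4*π^2*l*(l+1) + 8*π^2*l^2*(1+L+L*l))*(M*ω₁^(p'-1))) * (t₁ - t₀) := by
    have e : (r:ℝ) * ((4*π*l + 4*π^2*l*(l+1) + 8*π^2*l^2*(1+L+L*l)) * (M * (ω₁^(p'-1) * T₁)))
        = ((4*π*l + 4*π^2*l*(l+1) + 8*π^2*l^2*(1+L+L*l))*(M*ω₁^(p'-1))) * ((r:ℝ)*T₁) := by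
      ring
    rw [e]
    exact mul_le_mul_of_nonneg_left hrT (mul_nonneg hKW0 (mul_nonneg hM0 hw0.le))
  -- unfold RT1 and conclude
  have hRT : RT1 l f Df ft Lft u p ω₁ x t₀ t₁ =
      (∑ q ∈ Finset.range r,
        (QV1 l ft u p ω₁ x (tq q) (tq (q+1)) + QV2 l Lft u p ω₁ x (tq q) (tq (q+1))
          + Q1 l f Df u p ω₁ x (tq q) (tq (q+1)) + RL1 l f Df u p ω₁ x (tq q) (tq (q+1))))
      - Iterm l f Df u p ω₁ x (tq r) t₁
      + QV1 l ft u p ω₁ x (tq r) t₁ + QV2 l Lft u p ω₁ x (tq r) t₁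
      + Q1 l f Df u p ω₁ x (tq r) t₁ + Q1T l f Df u p ω₁ x (tq r) t₁
      + Hterm l f Df u p ω₁ x (tq r) t₁ := rfl
  rw [hRT]
  refine le_trans (norm_comb7 _ _ _ _ _ _ _) ?_
  have hBw : (0:ℝ) ≤ B * ω₁^(p'-1) := mul_nonneg hB0 hw0.le
  have hBwt : (0:ℝ) ≤ B * ω₁^(p'-1) * (t₁ - t₀) := mul_nonneg hBw (by linarith)
  refine le_trans (add_le_add (add_le_add (add_le_add (add_le_add (add_le_add (add_le_add
    (hSnorm.trans hSfin) tI) tQV1) tQV2) tQ1) tQ1T) tH) ?_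
  have hkey : ((4*π*l + 4*π^2*l*(l+1) + 8*π^2*l^2*(1+L+L*l))*(M*ω₁^(p'-1))) * (t₁ - t₀)
      + 8*π^2*l^2*(M*ω₁^(p'-1)) + 4*π^2*l*(M*ω₁^(p'-1)) + 8*π^3*l*(l+1)*(M*ω₁^(p'-1))
      + 4*π^2*l*(M*ω₁^(p'-1)) + 4*π^2*((l:ℝ)^2+(l:ℝ))*(M*ω₁^(p'-1))
      + (2*π*l*(M*ω₁^(p'-1)) + 8*π^2*l^2*(M*ω₁^(p'-1)))
      = B * ω₁^(p'-1) * ((L*(4*π*l + 4*π^2*l*(l+1) + 8*π^2*l^2*(1+L+L*l)) + 1) * (t₁ - t₀)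
        + (L*(8*π^2*l^2 + 4*π^2*l + 8*π^3*l*(l+1) + 4*π^2*l + 4*π^2*(l^2+l) + 2*π*l
            + 8*π^2*l^2) + 1))
        - (B*ω₁^(p'-1)*(t₁ - t₀) + B*ω₁^(p'-1)) := by
    rw [hMdef]; ring
  exact le_trans (le_of_eq hkey) (sub_le_self _ (add_nonneg hBwt hBw))
end

section
/- Bound on R: Under the setup assumptions, define R(t_s, t_e) := ∑_{1≤i≤l, 0≤j,m≤l} ω₁^{p_i+p_j+p_m} ∫_{t_s}^{t_e} u_i(ω₁θ) ∫_{t_s}^{θ} u_j(ω₁τ) ∫_{t_s}^{τ} L_{f_m}L_{f_j}f_i(σ, x(σ)) u_m(ω₁σ) dσ dτ dθ. Then ‖R(t_s, t_e)‖ ≤ (2/3) π² (l+1)³ L Λ₁ ‖x₀‖ ω₁^{p‴−2} T₁, where p‴ := max{ p_i + p_j + p_m : 1 ≤ i ≤ l, 0 ≤ j, m ≤ l, p_i + p_j + p_m < 2 }. -/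
open MeasureTheory Real Filter

open intervalIntegral in
private lemma nested_triple_bound {n : ℕ} (C : ℝ) (hC : 0 ≤ C) (ts te : ℝ) (hst : ts ≤ te)
    (ui uj um : ℝ → ℝ) (hui : ∀ t, |ui t| ≤ 1) (huj : ∀ t, |uj t| ≤ 1) (hum : ∀ t, |um t| ≤ 1)
    (g : ℝ → E n) (hg : ∀ σ ∈ Set.Icc ts te, ‖g σ‖ ≤ C) :
    ‖∫ θ in ts..te, ui θ • ∫ τ in ts..θ, uj τ • ∫ σ in ts..τ, um σ • g σ‖
      ≤ C * (te - ts) ^ 3 / 6 := by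
  have h1 : ∀ τ ∈ Set.Icc ts te, ‖∫ σ in ts..τ, um σ • g σ‖ ≤ C * (τ - ts) := by
    intro τ hτ
    have h := intervalIntegral.norm_integral_le_of_norm_le_const (C := C)
      (f := fun σ => um σ • g σ) (a := ts) (b := τ) ?_
    · rwa [abs_of_nonneg (by linarith [hτ.1])] at h
    · intro σ hσ
      rw [Set.uIoc_of_le hτ.1] at hσ
      have hσm : σ ∈ Set.Icc ts te := ⟨le_of_lt hσ.1, hσ.2.trans hτ.2⟩
      calc ‖um σ • g σ‖ = |um σ| * ‖g σ‖ := norm_smul _ _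
        _ ≤ 1 * C := mul_le_mul (hum σ) (hg σ hσm) (norm_nonneg _) zero_le_one
        _ = C := one_mul C
  have h2 : ∀ θ ∈ Set.Icc ts te,
      ‖∫ τ in ts..θ, uj τ • ∫ σ in ts..τ, um σ • g σ‖ ≤ C * (θ - ts) ^ 2 / 2 := by
    intro θ hθ
    have hb : IntervalIntegrable (fun τ => C * (τ - ts)) volume ts θ :=
      (by fun_prop : Continuous fun τ : ℝ => C * (τ - ts)).intervalIntegrable _ _
    have h := intervalIntegral.norm_integral_le_abs_of_norm_le (μ := volume)
      (f := fun τ => uj τ • ∫ σ in ts..τ, um σ • g σ) (a := ts) (b := θ)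
      (g := fun τ => C * (τ - ts)) ?_ hb
    · have hcomp : (∫ τ in ts..θ, C * (τ - ts)) = C * (θ - ts) ^ 2 / 2 := by
        rw [intervalIntegral.integral_const_mul,
          intervalIntegral.integral_comp_sub_right (fun x : ℝ => x) ts, sub_self, integral_id]
        ring
      rw [hcomp, abs_of_nonneg (div_nonneg (mul_nonneg hC (sq_nonneg _)) (by norm_num))] at h
      exact h
    · refine Filter.eventually_of_mem (self_mem_ae_restrict measurableSet_uIoc) ?_
      intro τ hτ
      rw [Set.uIoc_of_le hθ.1] at hτ
      have hτm : τ ∈ Set.Icc ts te := ⟨le_of_lt hτ.1, hτ.2.trans hθ.2⟩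
      calc ‖uj τ • ∫ σ in ts..τ, um σ • g σ‖ = |uj τ| * ‖∫ σ in ts..τ, um σ • g σ‖ :=
            norm_smul _ _
        _ ≤ 1 * (C * (τ - ts)) := mul_le_mul (huj τ) (h1 τ hτm) (norm_nonneg _) zero_le_one
        _ = C * (τ - ts) := one_mul _
  have hb : IntervalIntegrable (fun θ => C * (θ - ts) ^ 2 / 2) volume ts te :=
    (by fun_prop : Continuous fun θ : ℝ => C * (θ - ts) ^ 2 / 2).intervalIntegrable _ _
  have h := intervalIntegral.norm_integral_le_abs_of_norm_le (μ := volume)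
    (f := fun θ => ui θ • ∫ τ in ts..θ, uj τ • ∫ σ in ts..τ, um σ • g σ) (a := ts) (b := te)
    (g := fun θ => C * (θ - ts) ^ 2 / 2) ?_ hb
  · have hcomp : (∫ θ in ts..te, C * (θ - ts) ^ 2 / 2) = C * (te - ts) ^ 3 / 6 := by
      simp_rw [div_eq_mul_inv, mul_assoc, mul_comm ((_ : ℝ) ^ 2) _, ← mul_assoc]
      rw [intervalIntegral.integral_const_mul,
        intervalIntegral.integral_comp_sub_right (fun x : ℝ => x ^ 2) ts, sub_self,
        integral_pow]
      push_cast; ring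
    rw [hcomp, abs_of_nonneg (div_nonneg (mul_nonneg hC (pow_nonneg (by linarith) _)) (by norm_num))] at h
    exact h
  · refine Filter.eventually_of_mem (self_mem_ae_restrict measurableSet_uIoc) ?_
    intro θ hθ
    rw [Set.uIoc_of_le hst] at hθ
    have hθm : θ ∈ Set.Icc ts te := ⟨le_of_lt hθ.1, hθ.2⟩
    calc ‖ui θ • ∫ τ in ts..θ, uj τ • ∫ σ in ts..τ, um σ • g σ‖
        = |ui θ| * ‖∫ τ in ts..θ, uj τ • ∫ σ in ts..τ, um σ • g σ‖ := norm_smul _ _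
      _ ≤ 1 * (C * (θ - ts) ^ 2 / 2) := mul_le_mul (hui θ) (h2 θ hθm) (norm_nonneg _) zero_le_one
      _ = C * (θ - ts) ^ 2 / 2 := one_mul _

/-- **Bound on `R`** (Lemma 15). -/
theorem bound_R
    {n : ℕ} (l : ℕ)
    (f : ℕ → ℝ → E n → E n)
    (Df : ℕ → ℝ → E n → (E n →L[ℝ] E n))
    (ft : ℕ → ℝ → E n → E n)
    (Lft : ℕ → ℕ → ℝ → E n → E n)
    (DLf : ℕ → ℕ → ℝ → E n → (E n →L[ℝ] E n))
    (u : ℕ → ℝ → ℝ) (p : ℕ → ℝ) (L : ℝ)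
    (hyp : Hyps l f Df ft Lft DLf u p L)
    -- every triple of powers sums to less than `2`
    (hsum2 : ∀ i j m, 1 ≤ i → i ≤ l → j ≤ l → m ≤ l → p i + p j + p m < 2)
    -- setup: a bounded solution of (S) with frequency `ω₁ ≥ 1` on `[t₀, t₁]`
    (t₀ t₁ ω₁ Λ₁ : ℝ) (x₀ : E n) (x : ℝ → E n)
    (h01 : t₀ < t₁) (hω₁ : 1 ≤ ω₁) (hΛ₁ : 1 ≤ Λ₁)
    (hx0 : x t₀ = x₀)
    (hsol : IsSSol l f u p ω₁ x (Set.Icc t₀ t₁) t₀)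
    (hxb : ∀ t ∈ Set.Icc t₀ t₁, ‖x t‖ ≤ Λ₁ * ‖x₀‖)
    -- `p‴ = max { p_i + p_j + p_m : 1 ≤ i ≤ l, 0 ≤ j, m ≤ l, p_i + p_j + p_m < 2 }`
    (p3 : ℝ)
    (hp3ub : ∀ i j m, 1 ≤ i → i ≤ l → j ≤ l → m ≤ l → p i + p j + p m ≤ p3)
    (hp3mem : ∃ i j m, 1 ≤ i ∧ i ≤ l ∧ j ≤ l ∧ m ≤ l ∧ p i + p j + p m = p3)
    -- `t_s ∈ [t₀, t_r]` and `t_e ∈ [t_s, min (t_s + T₁) t₁]`, where `T₁ = 2π/ω₁`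
    (ts te : ℝ)
    (hts : ts ∈ Set.Icc t₀ (t₀ + (⌊(t₁ - t₀) / (2 * π / ω₁)⌋₊ : ℝ) * (2 * π / ω₁)))
    (hte : te ∈ Set.Icc ts (min (ts + 2 * π / ω₁) t₁)) :
    ‖Rrem l f Df DLf u p ω₁ x ts te‖
      ≤ (2/3) * π ^ 2 * ((l : ℝ) + 1) ^ 3 * L * Λ₁ * ‖x₀‖ * ω₁ ^ (p3 - 2) * (2 * π / ω₁) := by
  obtain ⟨hT0, hsub⟩ : (0:ℝ) < 2 * π / ω₁ ∧ Set.Icc ts te ⊆ Set.Icc t₀ t₁ := by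
    constructor
    · positivity
    · intro s hs
      exact ⟨le_trans hts.1 hs.1, le_trans hs.2 (le_trans hte.2 (min_le_right _ _))⟩
  have hω0 : (0:ℝ) < ω₁ := lt_of_lt_of_le one_pos hω₁
  have hst : ts ≤ te := hte.1
  have hteT : te - ts ≤ 2 * π / ω₁ := by
    have := le_trans hte.2 (min_le_left _ _); linarith
  set C : ℝ := L * (Λ₁ * ‖x₀‖) with hCdef
  have hC : 0 ≤ C := by
    have := hyp.hLpos
    have h0 : 0 ≤ Λ₁ * ‖x₀‖ := mul_nonneg (by linarith) (norm_nonneg _)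
    positivity
  set B : ℝ := ω₁ ^ p3 * (C * (te - ts) ^ 3 / 6) with hBdef
  have hterm : ∀ i ∈ Finset.Icc 1 l, ∀ j ∈ Finset.Icc 0 l, ∀ m ∈ Finset.Icc 0 l,
      ‖ω₁ ^ (p i + p j + p m) •
        ∫ θ in ts..te, u i (ω₁ * θ) •
          ∫ τ in ts..θ, u j (ω₁ * τ) •
            ∫ σ in ts..τ, u m (ω₁ * σ) • lieDeriv2 f Df DLf m j i σ (x σ)‖ ≤ B := by
    intro i hi j hj m hm
    simp only [Finset.mem_Icc] at hi hj hm
    have hil : i ≤ l := hi.2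
    have hjl : j ≤ l := hj.2
    have hml : m ≤ l := hm.2
    have hreg := hyp.hreg_LLf i j m hil hjl hml
    obtain ⟨-, hlip, hzero⟩ := hreg
    have hg : ∀ σ ∈ Set.Icc ts te, ‖lieDeriv2 f Df DLf m j i σ (x σ)‖ ≤ C := by
      intro σ hσ
      have h1 : ‖lieDeriv2 f Df DLf m j i σ (x σ)‖ ≤ L * ‖x σ‖ := by
        have := hlip σ (x σ) 0
        simpa [hzero σ] using this
      have h2 : ‖x σ‖ ≤ Λ₁ * ‖x₀‖ := hxb σ (hsub hσ)
      calc ‖lieDeriv2 f Df DLf m j i σ (x σ)‖ ≤ L * ‖x σ‖ := h1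
        _ ≤ L * (Λ₁ * ‖x₀‖) := by
            exact mul_le_mul_of_nonneg_left h2 (le_of_lt hyp.hLpos)
    have hnest := nested_triple_bound C hC ts te hst
      (fun θ => u i (ω₁ * θ)) (fun θ => u j (ω₁ * θ)) (fun θ => u m (ω₁ * θ))
      (fun θ => hyp.hubdd i hil _) (fun θ => hyp.hubdd j hjl _) (fun θ => hyp.hubdd m hml _)
      (fun σ => lieDeriv2 f Df DLf m j i σ (x σ)) hg
    rw [norm_smul, Real.norm_eq_abs,
      abs_of_pos (Real.rpow_pos_of_pos hω0 _)]
    calc ω₁ ^ (p i + p j + p m) *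
          ‖∫ θ in ts..te, u i (ω₁ * θ) •
            ∫ τ in ts..θ, u j (ω₁ * τ) •
              ∫ σ in ts..τ, u m (ω₁ * σ) • lieDeriv2 f Df DLf m j i σ (x σ)‖
        ≤ ω₁ ^ p3 * (C * (te - ts) ^ 3 / 6) := by
          apply mul_le_mul
          · exact Real.rpow_le_rpow_of_exponent_le hω₁ (hp3ub i j m hi.1 hil hjl hml)
          · exact hnest
          · exact norm_nonneg _
          · exact le_of_lt (Real.rpow_pos_of_pos hω0 _)
      _ = B := rfl
  have hsum : ‖Rrem l f Df DLf u p ω₁ x ts te‖ ≤ (l : ℝ) * ((l+1) * ((l+1) * B)) := by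
    rw [Rrem]
    calc ‖∑ i ∈ Finset.Icc 1 l, ∑ j ∈ Finset.Icc 0 l, ∑ m ∈ Finset.Icc 0 l,
          ω₁ ^ (p i + p j + p m) •
            ∫ θ in ts..te, u i (ω₁ * θ) •
              ∫ τ in ts..θ, u j (ω₁ * τ) •
                ∫ σ in ts..τ, u m (ω₁ * σ) • lieDeriv2 f Df DLf m j i σ (x σ)‖
        ≤ ∑ i ∈ Finset.Icc 1 l, ∑ j ∈ Finset.Icc 0 l, ∑ m ∈ Finset.Icc 0 l, B := by
          refine le_trans (norm_sum_le _ _) (Finset.sum_le_sum fun i hi => ?_)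
          refine le_trans (norm_sum_le _ _) (Finset.sum_le_sum fun j hj => ?_)
          exact le_trans (norm_sum_le _ _) (Finset.sum_le_sum fun m hm => hterm i hi j hj m hm)
      _ = (l : ℝ) * ((l+1) * ((l+1) * B)) := by
          simp [Finset.sum_const, Nat.card_Icc, mul_assoc]
  have hB0 : 0 ≤ B := by
    have h1 : (0:ℝ) ≤ ω₁ ^ p3 := le_of_lt (Real.rpow_pos_of_pos hω0 _)
    have h2 : (0:ℝ) ≤ (te - ts) ^ 3 := pow_nonneg (by linarith) _
    positivity
  have hBT : B ≤ ω₁ ^ p3 * (C * (2 * π / ω₁) ^ 3 / 6) := by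
    have h1 : (0:ℝ) < ω₁ ^ p3 := Real.rpow_pos_of_pos hω0 _
    have h3 : (te - ts) ^ 3 ≤ (2 * π / ω₁) ^ 3 :=
      pow_le_pow_left₀ (by linarith) hteT 3
    have : C * (te - ts) ^ 3 / 6 ≤ C * (2 * π / ω₁) ^ 3 / 6 := by
      apply div_le_div_of_nonneg_right ?_ (by norm_num) |>.trans_eq rfl
      exact mul_le_mul_of_nonneg_left h3 hC
    exact mul_le_mul_of_nonneg_left this (le_of_lt h1)
  have hrw : ω₁ ^ (p3 - 2) = ω₁ ^ p3 / ω₁ ^ (2:ℕ) := by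
    rw [Real.rpow_sub hω0, ← Real.rpow_natCast ω₁ 2]
    norm_num
  have hkey : ω₁ ^ p3 * (C * (2 * π / ω₁) ^ 3 / 6)
      = (2/3) * π ^ 2 * C * ω₁ ^ (p3 - 2) * (2 * π / ω₁) := by
    rw [hrw]
    field_simp
    ring
  have hcard : (l : ℝ) * ((l+1) * ((l+1) * B)) ≤ ((l:ℝ)+1)^3 * (ω₁ ^ p3 * (C * (2 * π / ω₁) ^ 3 / 6)) := by
    have hl1 : (l:ℝ) ≤ (l:ℝ) + 1 := by linarith
    have h0 : (0:ℝ) ≤ (l:ℝ) + 1 := by positivity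
    calc (l : ℝ) * ((l+1) * ((l+1) * B)) ≤ ((l:ℝ)+1) * ((l+1) * ((l+1) * B)) := by
          apply mul_le_mul_of_nonneg_right hl1
          positivity
      _ = ((l:ℝ)+1)^3 * B := by ring
      _ ≤ ((l:ℝ)+1)^3 * (ω₁ ^ p3 * (C * (2 * π / ω₁) ^ 3 / 6)) := by
          apply mul_le_mul_of_nonneg_left hBT
          positivity
  calc ‖Rrem l f Df DLf u p ω₁ x ts te‖ ≤ (l : ℝ) * ((l+1) * ((l+1) * B)) := hsum
    _ ≤ ((l:ℝ)+1)^3 * (ω₁ ^ p3 * (C * (2 * π / ω₁) ^ 3 / 6)) := hcard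
    _ = (2/3) * π ^ 2 * ((l : ℝ) + 1) ^ 3 * L * Λ₁ * ‖x₀‖ * ω₁ ^ (p3 - 2) * (2 * π / ω₁) := by
        rw [hkey, hCdef]; ring
end

section
/- Lipschitz properties I (example system): Let a ∈ ℝ, b ∈ ℝ \ {0} and k > 0. Define f₀, f₁, f₂ : ℝ → ℝ by f₀(x) := a x, f₁(x) := b √k |x| sin(log(x²/2)) for x ≠ 0 with f₁(0) := 0, and f₂(x) := b √k |x| cos(log(x²/2)) for x ≠ 0 with f₂(0) := 0. Then f₀ is globally Lipschitz with constant L₀ := |a|, and f₁ and f₂ are globally Lipschitz with constant L₁ = L₂ := 3|b|√k; moreover f_i(0) = 0 for i ∈ {0,1,2}. -/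
open Real

lemma aux_lip (T T' : ℝ → ℝ)
    (hT : ∀ t, HasDerivAt T (T' t) t)
    (hT1 : ∀ t, |T t| ≤ 1) (hT'1 : ∀ t, |T' t| ≤ 1)
    (G : ℝ → ℝ)
    (hG : ∀ x, G x = if x = 0 then 0 else |x| * T (Real.log (x ^ 2 / 2))) :
    ∀ x y : ℝ, |G x - G y| ≤ 3 * |x - y| := by
  have hbound : ∀ x, |G x| ≤ |x| := by
    intro x
    rw [hG]
    split_ifs with h
    · simp
    · rw [abs_mul, abs_abs]
      calc |x| * |T (Real.log (x ^ 2 / 2))| ≤ |x| * 1 :=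
        mul_le_mul_of_nonneg_left (hT1 _) (abs_nonneg _)
      _ = |x| := mul_one _
  have heven : ∀ x, G (-x) = G x := by
    intro x
    rw [hG, hG]
    simp [neg_eq_zero, abs_neg, neg_pow]
  set F' : ℝ → ℝ := fun x => T (Real.log (x ^ 2 / 2)) + 2 * T' (Real.log (x ^ 2 / 2)) with hF'
  have hderiv : ∀ x ∈ Set.Ioi (0:ℝ), HasDerivWithinAt G (F' x) (Set.Ioi 0) x := by
    intro x hx
    have hx0 : (0:ℝ) < x := hx
    have hv : x ^ 2 / 2 ≠ 0 := by positivity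
    have h1 : HasDerivAt (fun x : ℝ => x ^ 2 / 2) x x := by
      have := (hasDerivAt_pow 2 x).div_const 2
      refine this.congr_deriv ?_
      push_cast; ring
    have h2 : HasDerivAt (fun x : ℝ => Real.log (x ^ 2 / 2)) ((x ^ 2 / 2)⁻¹ * x) x :=
      by have := (Real.hasDerivAt_log hv).comp x h1; exact this
    have h3 : HasDerivAt (fun x : ℝ => T (Real.log (x ^ 2 / 2)))
        (T' (Real.log (x ^ 2 / 2)) * ((x ^ 2 / 2)⁻¹ * x)) x :=
      (hT _).comp x h2
    have h4 : HasDerivAt (fun x : ℝ => x * T (Real.log (x ^ 2 / 2)))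
        (1 * T (Real.log (x ^ 2 / 2)) + x * (T' (Real.log (x ^ 2 / 2)) * ((x ^ 2 / 2)⁻¹ * x)))
        x := (hasDerivAt_id x).mul h3
    have h5 : HasDerivAt (fun x : ℝ => x * T (Real.log (x ^ 2 / 2))) (F' x) x := by
      convert h4 using 1
      rw [hF']
      field_simp
    refine h5.hasDerivWithinAt.congr ?_ ?_
    · intro y hy
      rw [hG, if_neg (ne_of_gt hy), abs_of_pos hy]
    · rw [hG, if_neg (ne_of_gt hx0), abs_of_pos hx0]
  have hFbound : ∀ x ∈ Set.Ioi (0:ℝ), ‖F' x‖ ≤ 3 := by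
    intro x _
    rw [hF', Real.norm_eq_abs]
    have h1 := hT1 (Real.log (x ^ 2 / 2))
    have h2 := hT'1 (Real.log (x ^ 2 / 2))
    have h3 := abs_add_le (T (Real.log (x ^ 2 / 2))) (2 * T' (Real.log (x ^ 2 / 2)))
    rw [abs_mul, abs_two] at h3
    simp only
    linarith
  have hpos : ∀ x ∈ Set.Ioi (0:ℝ), ∀ y ∈ Set.Ioi (0:ℝ), |G x - G y| ≤ 3 * |x - y| := by
    intro x hx y hy
    have := (convex_Ioi (0:ℝ)).norm_image_sub_le_of_norm_hasDerivWithin_le hderiv hFbound hy hx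
    simpa [Real.norm_eq_abs] using this
  have hmix : ∀ x y : ℝ, 0 ≤ x → y ≤ 0 → |G x - G y| ≤ 3 * |x - y| := by
    intro x y hx hy
    calc |G x - G y| ≤ |G x| + |G y| := abs_sub _ _
      _ ≤ |x| + |y| := add_le_add (hbound x) (hbound y)
      _ = x + (-y) := by rw [abs_of_nonneg hx, abs_of_nonpos hy]
      _ = |x - y| := by rw [abs_of_nonneg (by linarith)]; ring
      _ ≤ 3 * |x - y| := by nlinarith [abs_nonneg (x - y)]
  intro x y
  rcases lt_trichotomy x 0 with hx | hx | hx
  · rcases lt_trichotomy y 0 with hy | hy | hy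
    · have := hpos (-x) (by simpa using hx) (-y) (by simpa using hy)
      rw [heven, heven] at this
      calc |G x - G y| ≤ 3 * |(-x) - (-y)| := this
        _ = 3 * |x - y| := by rw [show (-x) - (-y) = -(x - y) by ring, abs_neg]
    · subst hy
      have := hmix 0 x le_rfl hx.le
      calc |G x - G 0| = |G 0 - G x| := abs_sub_comm _ _
        _ ≤ 3 * |0 - x| := this
        _ = 3 * |x - 0| := by rw [abs_sub_comm]
    · have := hmix y x hy.le hx.le
      calc |G x - G y| = |G y - G x| := abs_sub_comm _ _
        _ ≤ 3 * |y - x| := this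
        _ = 3 * |x - y| := by rw [abs_sub_comm]
  · subst hx
    rcases le_or_gt y 0 with hy | hy
    · exact hmix 0 y le_rfl hy
    · have := hmix y 0 hy.le le_rfl
      calc |G 0 - G y| = |G y - G 0| := abs_sub_comm _ _
        _ ≤ 3 * |y - 0| := this
        _ = 3 * |0 - y| := by rw [abs_sub_comm]
  · rcases lt_trichotomy y 0 with hy | hy | hy
    · exact hmix x y hx.le hy.le
    · subst hy; exact hmix x 0 hx.le le_rfl
    · exact hpos x hx y hy


/-- **Lipschitz properties I** (example system, Lemma 16): the vector fields
`f₀(x) = a x`, `f₁(x) = b√k |x| sin(log(x²/2))`, `f₂(x) = b√k |x| cos(log(x²/2))`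
(extended by `0` at `x = 0`) are globally Lipschitz with constants
`L₀ = |a|` and `L₁ = L₂ = 3|b|√k`, and vanish at the origin. -/
theorem lipschitz_properties_I
    (a b k : ℝ) (hb : b ≠ 0) (hk : 0 < k)
    (f₀ f₁ f₂ : ℝ → ℝ)
    (hf₀ : ∀ x, f₀ x = a * x)
    (hf₁ : ∀ x, f₁ x =
      if x = 0 then 0 else b * Real.sqrt k * |x| * Real.sin (Real.log (x ^ 2 / 2)))
    (hf₂ : ∀ x, f₂ x =
      if x = 0 then 0 else b * Real.sqrt k * |x| * Real.cos (Real.log (x ^ 2 / 2))) :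
    (∀ x y : ℝ, |f₀ x - f₀ y| ≤ |a| * |x - y|) ∧
    (∀ x y : ℝ, |f₁ x - f₁ y| ≤ 3 * |b| * Real.sqrt k * |x - y|) ∧
    (∀ x y : ℝ, |f₂ x - f₂ y| ≤ 3 * |b| * Real.sqrt k * |x - y|) ∧
    f₀ 0 = 0 ∧ f₁ 0 = 0 ∧ f₂ 0 = 0 := by
  refine ⟨?_, ?_, ?_, by simp [hf₀], by simp [hf₁], by simp [hf₂]⟩
  · intro x y
    rw [hf₀, hf₀, ← mul_sub, abs_mul]
  · intro x y
    have key := aux_lip Real.sin Real.cos (fun t => Real.hasDerivAt_sin t)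
      (fun t => abs_sin_le_one t) (fun t => abs_cos_le_one t)
      (fun x => if x = 0 then 0 else |x| * Real.sin (Real.log (x ^ 2 / 2)))
      (fun x => rfl) x y
    have hrw : ∀ z : ℝ, f₁ z =
        (b * Real.sqrt k) * (if z = 0 then 0 else |z| * Real.sin (Real.log (z ^ 2 / 2))) := by
      intro z; rw [hf₁]; split_ifs <;> ring
    rw [hrw, hrw, ← mul_sub, abs_mul, abs_mul, abs_of_nonneg (Real.sqrt_nonneg k)]
    calc |b| * Real.sqrt k * |(if x = 0 then 0 else |x| * Real.sin (Real.log (x ^ 2 / 2))) -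
          (if y = 0 then 0 else |y| * Real.sin (Real.log (y ^ 2 / 2)))|
        ≤ |b| * Real.sqrt k * (3 * |x - y|) := by
          apply mul_le_mul_of_nonneg_left key (by positivity)
      _ = 3 * |b| * Real.sqrt k * |x - y| := by ring
  · intro x y
    have key := aux_lip Real.cos (fun t => -Real.sin t) (fun t => Real.hasDerivAt_cos t)
      (fun t => abs_cos_le_one t) (fun t => by rw [abs_neg]; exact abs_sin_le_one t)
      (fun x => if x = 0 then 0 else |x| * Real.cos (Real.log (x ^ 2 / 2)))
      (fun x => rfl) x y
    have hrw : ∀ z : ℝ, f₂ z =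
        (b * Real.sqrt k) * (if z = 0 then 0 else |z| * Real.cos (Real.log (z ^ 2 / 2))) := by
      intro z; rw [hf₂]; split_ifs <;> ring
    rw [hrw, hrw, ← mul_sub, abs_mul, abs_mul, abs_of_nonneg (Real.sqrt_nonneg k)]
    calc |b| * Real.sqrt k * |(if x = 0 then 0 else |x| * Real.cos (Real.log (x ^ 2 / 2))) -
          (if y = 0 then 0 else |y| * Real.cos (Real.log (y ^ 2 / 2)))|
        ≤ |b| * Real.sqrt k * (3 * |x - y|) := by
          apply mul_le_mul_of_nonneg_left key (by positivity)
      _ = 3 * |b| * Real.sqrt k * |x - y| := by ring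
end

section
/- Lipschitz properties II (example system): Let a ∈ ℝ, b ∈ ℝ \ {0} and k > 0, and let f₀(x) := a x, f₁(x) := b √k |x| sin(log(x²/2)) for x ≠ 0 with f₁(0) := 0, and f₂(x) := b √k |x| cos(log(x²/2)) for x ≠ 0 with f₂(0) := 0. For i, j ∈ {0,1,2} define the Lie derivative L_{f_j}f_i : ℝ → ℝ by L_{f_j}f_i(x) := f_i′(x) · f_j(x) for x ≠ 0 (where f_i′ denotes the classical derivative, which exists for all x ≠ 0) and L_{f_j}f_i(0) := 0. Then each L_{f_j}f_i is globally Lipschitz with constant L_{ij} := 6|b|√k · L_j + L_i L_j, where L₀ := |a| and L₁ = L₂ := 3|b|√k; moreover L_{f_j}f_i(0) = 0. -/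
open Real Filter Set

private lemma logsq_hasDerivAt {z : ℝ} (hz : z ≠ 0) :
    HasDerivAt (fun t : ℝ => Real.log (t ^ 2 / 2)) (2 / z) z := by
  have h1 : HasDerivAt (fun t : ℝ => t ^ 2 / 2) z z := by
    simpa using (hasDerivAt_pow 2 z).div_const 2
  have h2 := (Real.hasDerivAt_log (by positivity : z ^ 2 / 2 ≠ 0)).comp z h1
  refine h2.congr_deriv ?_
  field_simp

private lemma model_hasDerivAt (A A' : ℝ → ℝ) (hA : ∀ u, HasDerivAt A (A' u) u)
    {z : ℝ} (hz : z ≠ 0) :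
    HasDerivAt (fun t : ℝ => t * A (Real.log (t ^ 2 / 2)))
      (A (Real.log (z ^ 2 / 2)) + 2 * A' (Real.log (z ^ 2 / 2))) z := by
  have h := (hasDerivAt_id z).mul ((hA _).comp z (logsq_hasDerivAt hz))
  refine h.congr_deriv ?_
  simp only [Function.comp_apply, id]
  field_simp

private lemma sc_bound (p q u : ℝ) : |p * Real.sin u + q * Real.cos u| ≤ |p| + |q| := by
  calc |p * Real.sin u + q * Real.cos u| ≤ |p * Real.sin u| + |q * Real.cos u| := abs_add_le _ _
    _ = |p| * |Real.sin u| + |q| * |Real.cos u| := by rw [abs_mul, abs_mul]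
    _ ≤ |p| * 1 + |q| * 1 := by
        gcongr
        · exact Real.abs_sin_le_one u
        · exact Real.abs_cos_le_one u
    _ = |p| + |q| := by ring

private def RepLie (f : ℝ → ℝ) (K L : ℝ) : Prop :=
  ∀ ε : ℝ, (ε = 1 ∨ ε = -1) → ∃ A A' A'' : ℝ → ℝ,
    (∀ u, HasDerivAt A (A' u) u) ∧ (∀ u, HasDerivAt A' (A'' u) u) ∧
    (∀ z : ℝ, 0 < ε * z → f z = z * A (Real.log (z ^ 2 / 2))) ∧
    (∀ u, |A u| ≤ L) ∧ (∀ u, |A u + 2 * A' u| ≤ L) ∧ (∀ u, |A' u + 2 * A'' u| ≤ K)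

private lemma pair (K Li Lj : ℝ) (hK : 0 ≤ K) (hLi : 0 ≤ Li) (hLj : 0 ≤ Lj)
    (fi fj g : ℝ → ℝ)
    (hg : ∀ x, g x = if x = 0 then 0 else deriv fi x * fj x)
    (hi : RepLie fi K Li) (hj : RepLie fj K Lj) :
    (∀ x y : ℝ, |g x - g y| ≤ (2 * K * Lj + Li * Lj) * |x - y|) ∧ g 0 = 0 := by
  set C := 2 * K * Lj + Li * Lj with hC
  have hC0 : 0 ≤ C := by positivity
  have key : ∀ ε : ℝ, (ε = 1 ∨ ε = -1) →
      (∀ z, 0 < ε * z → |g z| ≤ C * |z|) ∧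
      (∀ x y, 0 < ε * x → 0 < ε * y → |g x - g y| ≤ C * |x - y|) := by
    intro ε hε
    obtain ⟨Ai, Ai', Ai'', hAi, hAi', hfi, hAiB, hBiB, hBi'B⟩ := hi ε hε
    obtain ⟨Aj, Aj', Aj'', hAj, hAj', hfj, hAjB, hBjB, hBj'B⟩ := hj ε hε
    set s : Set ℝ := {t | 0 < ε * t} with hs
    have hsopen : IsOpen s := isOpen_lt continuous_const (continuous_const.mul continuous_id)
    have hzne : ∀ z ∈ s, z ≠ 0 := by
      rintro z hz rfl
      simp [hs] at hz
    have hfiD : ∀ z ∈ s, HasDerivAt fi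
        (Ai (Real.log (z ^ 2 / 2)) + 2 * Ai' (Real.log (z ^ 2 / 2))) z := by
      intro z hz
      refine (model_hasDerivAt Ai Ai' hAi (hzne z hz)).congr_of_eventuallyEq ?_
      exact Filter.eventuallyEq_of_mem (hsopen.mem_nhds hz) (fun t ht => hfi t ht)
    have hgG : ∀ t ∈ s, g t =
        (Ai (Real.log (t ^ 2 / 2)) + 2 * Ai' (Real.log (t ^ 2 / 2))) *
          (t * Aj (Real.log (t ^ 2 / 2))) := by
      intro t ht
      rw [hg t, if_neg (hzne t ht), (hfiD t ht).deriv, hfj t ht]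
    set D : ℝ → ℝ := fun t =>
      (Ai' (Real.log (t ^ 2 / 2)) + 2 * Ai'' (Real.log (t ^ 2 / 2))) * (2 / t) *
          (t * Aj (Real.log (t ^ 2 / 2))) +
        (Ai (Real.log (t ^ 2 / 2)) + 2 * Ai' (Real.log (t ^ 2 / 2))) *
          (Aj (Real.log (t ^ 2 / 2)) + 2 * Aj' (Real.log (t ^ 2 / 2))) with hD
    have hgD : ∀ z ∈ s, HasDerivAt g (D z) z := by
      intro z hz
      have hz0 := hzne z hz
      have hB : ∀ u, HasDerivAt (fun u => Ai u + 2 * Ai' u) (Ai' u + 2 * Ai'' u) u :=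
        fun u => (hAi u).add ((hAi' u).const_mul 2)
      have h1 : HasDerivAt (fun t : ℝ => Ai (Real.log (t ^ 2 / 2)) + 2 * Ai' (Real.log (t ^ 2 / 2)))
          ((Ai' (Real.log (z ^ 2 / 2)) + 2 * Ai'' (Real.log (z ^ 2 / 2))) * (2 / z)) z :=
        HasDerivAt.comp z (hB _) (logsq_hasDerivAt hz0)
      have h2 := model_hasDerivAt Aj Aj' hAj hz0
      have h3 := h1.mul h2
      refine h3.congr_of_eventuallyEq ?_
      exact Filter.eventuallyEq_of_mem (hsopen.mem_nhds hz) (fun t ht => hgG t ht)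
    have hDb : ∀ z ∈ s, |D z| ≤ C := by
      intro z hz
      have hz0 := hzne z hz
      set u := Real.log (z ^ 2 / 2)
      have e : D z = 2 * ((Ai' u + 2 * Ai'' u) * Aj u) +
          (Ai u + 2 * Ai' u) * (Aj u + 2 * Aj' u) := by
        rw [hD]
        field_simp
        ring
      rw [e]
      have b1 : |2 * ((Ai' u + 2 * Ai'' u) * Aj u)| ≤ 2 * (K * Lj) := by
        rw [abs_mul, abs_mul, abs_two]
        nlinarith [hBi'B u, hAjB u, abs_nonneg (Ai' u + 2 * Ai'' u), abs_nonneg (Aj u), hK, hLj]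
      have b2 : |(Ai u + 2 * Ai' u) * (Aj u + 2 * Aj' u)| ≤ Li * Lj := by
        rw [abs_mul]
        nlinarith [hBiB u, hBjB u, abs_nonneg (Ai u + 2 * Ai' u), abs_nonneg (Aj u + 2 * Aj' u),
          hLi, hLj]
      calc |2 * ((Ai' u + 2 * Ai'' u) * Aj u) + (Ai u + 2 * Ai' u) * (Aj u + 2 * Aj' u)|
          ≤ |2 * ((Ai' u + 2 * Ai'' u) * Aj u)| + |(Ai u + 2 * Ai' u) * (Aj u + 2 * Aj' u)| :=
            abs_add_le _ _
        _ ≤ 2 * (K * Lj) + Li * Lj := add_le_add b1 b2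
        _ = C := by rw [hC]; ring
    have hconv : Convex ℝ s := by
      rcases hε with rfl | rfl
      · have hseq : s = Set.Ioi (0 : ℝ) := by ext t; simp [hs]
        rw [hseq]; exact convex_Ioi 0
      · have hseq : s = Set.Iio (0 : ℝ) := by ext t; simp [hs, neg_mul, neg_pos]
        rw [hseq]; exact convex_Iio 0
    constructor
    · intro z hz
      set u := Real.log (z ^ 2 / 2)
      rw [hgG z hz, abs_mul, abs_mul]
      have h1 : |Ai u + 2 * Ai' u| * (|z| * |Aj u|) ≤ Li * (|z| * Lj) :=
        mul_le_mul (hBiB u) (mul_le_mul_of_nonneg_left (hAjB u) (abs_nonneg z))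
          (by positivity) hLi
      nlinarith [h1, mul_nonneg (mul_nonneg hK hLj) (abs_nonneg z)]
    · intro x y hx hy
      have H := Convex.norm_image_sub_le_of_norm_hasDerivWithin_le
        (fun z hz => (hgD z hz).hasDerivWithinAt)
        (fun z hz => by rw [Real.norm_eq_abs]; exact hDb z hz) hconv hy hx
      simpa [Real.norm_eq_abs] using H
  obtain ⟨hv₁, hl₁⟩ := key 1 (Or.inl rfl)
  obtain ⟨hv₂, hl₂⟩ := key (-1) (Or.inr rfl)
  have hg0 : g 0 = 0 := by simp [hg 0]
  have hval : ∀ x, |g x| ≤ C * |x| := by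
    intro x
    rcases lt_trichotomy x 0 with h | h | h
    · exact hv₂ x (by nlinarith)
    · subst h; simp [hg0]
    · exact hv₁ x (by nlinarith)
  refine ⟨?_, hg0⟩
  intro x y
  rcases lt_trichotomy x 0 with hx | hx | hx <;> rcases lt_trichotomy y 0 with hy | hy | hy
  · exact hl₂ x y (by nlinarith) (by nlinarith)
  · subst hy; simpa [hg0] using hval x
  · have h1 := hval x
    have h2 := hval y
    have hx' : |x| = -x := abs_of_neg hx
    have hy' : |y| = y := abs_of_pos hy
    have hxy : |x - y| = y - x := by rw [abs_of_neg (by linarith : x - y < 0)]; ring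
    have habs : |g x - g y| ≤ |g x| + |g y| := abs_sub _ _
    rw [hx'] at h1; rw [hy'] at h2; rw [hxy]
    linarith
  · subst hx; simpa [hg0, abs_sub_comm] using hval y
  · subst hx; subst hy; simp [hg0]
  · subst hx; simpa [hg0, abs_sub_comm] using hval y
  · have h1 := hval x
    have h2 := hval y
    have hx' : |x| = x := abs_of_pos hx
    have hy' : |y| = -y := abs_of_neg hy
    have hxy : |x - y| = x - y := abs_of_pos (by linarith)
    have habs : |g x - g y| ≤ |g x| + |g y| := abs_sub _ _
    rw [hx'] at h1; rw [hy'] at h2; rw [hxy]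
    linarith
  · subst hy; simpa [hg0] using hval x
  · exact hl₁ x y (by nlinarith) (by nlinarith)

private lemma rep_of_trig (c : ℝ) (f T T' T'' : ℝ → ℝ)
    (hT : ∀ u, HasDerivAt T (T' u) u) (hT' : ∀ u, HasDerivAt T' (T'' u) u)
    (hTb : ∀ u, |T u| ≤ 1) (hTb2 : ∀ u, |T u + 2 * T' u| ≤ 3)
    (hTb3 : ∀ u, |T' u + 2 * T'' u| ≤ 3)
    (hf : ∀ z : ℝ, z ≠ 0 → f z = c * |z| * T (Real.log (z ^ 2 / 2))) :
    RepLie f (3 * |c|) (3 * |c|) := by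
  intro ε hε
  have hεabs : |ε| = 1 := by rcases hε with rfl | rfl <;> simp
  refine ⟨fun u => ε * c * T u, fun u => ε * c * T' u, fun u => ε * c * T'' u,
    fun u => (hT u).const_mul (ε * c), fun u => (hT' u).const_mul (ε * c), ?_, ?_, ?_, ?_⟩
  · intro z hz
    have hz0 : z ≠ 0 := by rintro rfl; simp at hz
    have habs : |z| = ε * z := by
      rcases hε with rfl | rfl
      · rw [abs_of_pos (by linarith [hz] : (0:ℝ) < z)]; ring
      · rw [abs_of_neg (by nlinarith : z < (0:ℝ))]; ring
    rw [hf z hz0, habs]; ring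
  · intro u
    have : |ε * c * T u| = |ε| * |c| * |T u| := by rw [abs_mul, abs_mul]
    rw [this, hεabs]
    nlinarith [hTb u, abs_nonneg c, abs_nonneg (T u)]
  · intro u
    have e : ε * c * T u + 2 * (ε * c * T' u) = (ε * c) * (T u + 2 * T' u) := by ring
    rw [e, abs_mul, abs_mul, hεabs]
    nlinarith [hTb2 u, abs_nonneg c, abs_nonneg (T u + 2 * T' u)]
  · intro u
    have e : ε * c * T' u + 2 * (ε * c * T'' u) = (ε * c) * (T' u + 2 * T'' u) := by ring
    rw [e, abs_mul, abs_mul, hεabs]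
    nlinarith [hTb3 u, abs_nonneg c, abs_nonneg (T' u + 2 * T'' u)]

/-- **Lipschitz properties II** (example system, Lemma 17): the Lie derivatives
`L_{f_j} f_i (x) = f_i′(x) f_j(x)` (extended by `0` at `x = 0`) of the example vector
fields are globally Lipschitz with constants `L_{ij} = 6|b|√k L_j + L_i L_j`, and
vanish at the origin. -/
theorem lipschitz_properties_II
    (a b k : ℝ) (hb : b ≠ 0) (hk : 0 < k)
    (f : Fin 3 → ℝ → ℝ)
    (hf0 : ∀ x, f 0 x = a * x)
    (hf1 : ∀ x, f 1 x =
      if x = 0 then 0 else b * Real.sqrt k * |x| * Real.sin (Real.log (x ^ 2 / 2)))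
    (hf2 : ∀ x, f 2 x =
      if x = 0 then 0 else b * Real.sqrt k * |x| * Real.cos (Real.log (x ^ 2 / 2)))
    (L : Fin 3 → ℝ)
    (hL0 : L 0 = |a|) (hL1 : L 1 = 3 * |b| * Real.sqrt k) (hL2 : L 2 = 3 * |b| * Real.sqrt k)
    (Lf : Fin 3 → Fin 3 → ℝ → ℝ)
    (hLf : ∀ (j i : Fin 3) (x : ℝ),
      Lf j i x = if x = 0 then 0 else deriv (f i) x * f j x) :
    ∀ j i : Fin 3,
      (∀ x y : ℝ, |Lf j i x - Lf j i y|
        ≤ (6 * |b| * Real.sqrt k * L j + L i * L j) * |x - y|) ∧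
      Lf j i 0 = 0 := by
  have hsk : (0:ℝ) ≤ Real.sqrt k := Real.sqrt_nonneg k
  have hcabs : |b * Real.sqrt k| = |b| * Real.sqrt k := by
    rw [abs_mul, abs_of_nonneg hsk]
  have hKeq : 3 * |b * Real.sqrt k| = 3 * |b| * Real.sqrt k := by rw [hcabs]; ring
  have hK : (0:ℝ) ≤ 3 * |b| * Real.sqrt k := by positivity
  -- trig bounds
  have hsin2 : ∀ u : ℝ, |Real.sin u + 2 * Real.cos u| ≤ 3 := by
    intro u
    have := sc_bound 1 2 u
    simp only [one_mul] at this
    calc |Real.sin u + 2 * Real.cos u| ≤ |1| + |2| := by simpa [one_mul] using sc_bound 1 2 u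
      _ = 3 := by norm_num
  have hcos2 : ∀ u : ℝ, |Real.cos u + 2 * -Real.sin u| ≤ 3 := by
    intro u
    have h := sc_bound (-2) 1 u
    have e : Real.cos u + 2 * -Real.sin u = (-2) * Real.sin u + 1 * Real.cos u := by ring
    rw [e]
    calc |(-2) * Real.sin u + 1 * Real.cos u| ≤ |(-2 : ℝ)| + |(1 : ℝ)| := h
      _ = 3 := by norm_num
  have hncos2 : ∀ u : ℝ, |-Real.sin u + 2 * -Real.cos u| ≤ 3 := by
    intro u
    have h := sc_bound (-1) (-2) u
    have e : -Real.sin u + 2 * -Real.cos u = (-1) * Real.sin u + (-2) * Real.cos u := by ring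
    rw [e]
    calc |(-1 : ℝ) * Real.sin u + (-2) * Real.cos u| ≤ |(-1 : ℝ)| + |(-2 : ℝ)| := h
      _ = 3 := by norm_num
  have hrep1 : RepLie (f 1) (3 * |b| * Real.sqrt k) (3 * |b| * Real.sqrt k) := by
    rw [← hKeq]
    refine rep_of_trig (b * Real.sqrt k) (f 1) Real.sin Real.cos (fun u => -Real.sin u)
      Real.hasDerivAt_sin (fun u => Real.hasDerivAt_cos u) Real.abs_sin_le_one hsin2 hcos2 ?_
    intro z hz
    rw [hf1 z, if_neg hz]
  have hrep2 : RepLie (f 2) (3 * |b| * Real.sqrt k) (3 * |b| * Real.sqrt k) := by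
    rw [← hKeq]
    refine rep_of_trig (b * Real.sqrt k) (f 2) Real.cos (fun u => -Real.sin u)
      (fun u => -Real.cos u) (fun u => Real.hasDerivAt_cos u)
      (fun u => (Real.hasDerivAt_sin u).neg) Real.abs_cos_le_one hcos2 hncos2 ?_
    intro z hz
    rw [hf2 z, if_neg hz]
  have hrep0 : RepLie (f 0) (3 * |b| * Real.sqrt k) |a| := by
    intro ε hε
    refine ⟨fun _ => a, fun _ => 0, fun _ => 0, fun u => hasDerivAt_const u a,
      fun u => hasDerivAt_const u 0, fun z hz => by rw [hf0 z]; ring,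
      fun u => le_refl |a|, fun u => by norm_num, fun u => by simpa using hK⟩
  have hrep : ∀ i : Fin 3, RepLie (f i) (3 * |b| * Real.sqrt k) (L i) := by
    intro i
    fin_cases i
    · show RepLie (f 0) _ (L 0); rw [hL0]; exact hrep0
    · show RepLie (f 1) _ (L 1); rw [hL1]; exact hrep1
    · show RepLie (f 2) _ (L 2); rw [hL2]; exact hrep2
  have hLnn : ∀ i : Fin 3, 0 ≤ L i := by
    intro i
    fin_cases i
    · show (0:ℝ) ≤ L 0; rw [hL0]; exact abs_nonneg a
    · show (0:ℝ) ≤ L 1; rw [hL1]; exact hK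
    · show (0:ℝ) ≤ L 2; rw [hL2]; exact hK
  intro j i
  have hp := pair (3 * |b| * Real.sqrt k) (L i) (L j) hK (hLnn i) (hLnn j)
    (f i) (f j) (Lf j i) (hLf j i) (hrep i) (hrep j)
  refine ⟨fun x y => ?_, hp.2⟩
  have h := hp.1 x y
  have hCeq : 2 * (3 * |b| * Real.sqrt k) * L j + L i * L j
      = 6 * |b| * Real.sqrt k * L j + L i * L j := by ring
  rw [hCeq] at h
  exact h
end

section
/- Lipschitz properties III (example system): Let a ∈ ℝ, b ∈ ℝ \ {0} and k > 0, and let f₀(x) := a x, f₁(x) := b √k |x| sin(log(x²/2)) for x ≠ 0 with f₁(0) := 0, and f₂(x) := b √k |x| cos(log(x²/2)) for x ≠ 0 with f₂(0) := 0. For i, j, m ∈ {0,1,2} define L_{f_j}f_i(x) := f_i′(x) f_j(x) for x ≠ 0 with L_{f_j}f_i(0) := 0, and L_{f_m}L_{f_j}f_i(x) := (L_{f_j}f_i)′(x) · f_m(x) for x ≠ 0 (the classical derivative exists for all x ≠ 0) with L_{f_m}L_{f_j}f_i(0) := 0. Then each L_{f_m}L_{f_j}f_i is globally Lipschitz with constant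 L_{ijm} := 22|b|√k · L_j L_m + 6|b|√k · L_i L_m + L_i L_j L_m, where L₀ := |a| and L₁ = L₂ := 3|b|√k. -/
open Real
namespace LipIII

noncomputable def uu (y : ℝ) : ℝ := Real.log (y ^ 2 / 2)

lemma hasDerivAt_uu {x : ℝ} (hx : x ≠ 0) : HasDerivAt uu (2 / x) x := by
  have h1 : HasDerivAt (fun y : ℝ => y ^ 2 / 2) ((2 : ℕ) * x ^ 1 / 2) x :=
    (hasDerivAt_pow 2 x).div_const 2
  have h2 : x ^ 2 / 2 ≠ 0 := by positivity
  have h3 := (Real.hasDerivAt_log h2).comp x h1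
  refine h3.congr_deriv ?_
  field_simp
  ring

lemma base {g g1 : ℝ → ℝ} (hg : ∀ t, HasDerivAt g (g1 t) t) {x : ℝ} (hx : x ≠ 0) :
    HasDerivAt (fun y => y * g (uu y)) (g (uu x) + 2 * g1 (uu x)) x := by
  have h1 : HasDerivAt (fun y => g (uu y)) (g1 (uu x) * (2 / x)) x :=
    (hg (uu x)).comp x (hasDerivAt_uu hx)
  have h2 := (hasDerivAt_id x).mul h1
  refine h2.congr_deriv ?_
  simp only [id]
  field_simp

noncomputable def pfn (v : ℝ × ℝ × ℝ) : ℝ → ℝ :=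
  fun t => v.1 + v.2.1 * Real.sin t + v.2.2 * Real.cos t
def dco (v : ℝ × ℝ × ℝ) : ℝ × ℝ × ℝ := (0, -v.2.2, v.2.1)
def co (a c : ℝ) : Fin 3 → ℝ × ℝ × ℝ := ![(a, 0, 0), (0, c, 0), (0, 0, c)]
noncomputable def PP (a c : ℝ) (ι : Fin 3) (n : ℕ) : ℝ → ℝ := pfn (dco^[n] (co a c ι))

noncomputable def Qf (a c : ℝ) (ι : Fin 3) : ℝ → ℝ :=
  fun t => PP a c ι 0 t + 2 * PP a c ι 1 t
noncomputable def Q1f (a c : ℝ) (ι : Fin 3) : ℝ → ℝ :=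
  fun t => PP a c ι 1 t + 2 * PP a c ι 2 t
noncomputable def Q2f (a c : ℝ) (ι : Fin 3) : ℝ → ℝ :=
  fun t => PP a c ι 2 t + 2 * PP a c ι 3 t
noncomputable def Rf (a c : ℝ) (i j : Fin 3) : ℝ → ℝ :=
  fun t => Qf a c i t * PP a c j 0 t
noncomputable def R1f (a c : ℝ) (i j : Fin 3) : ℝ → ℝ :=
  fun t => Q1f a c i t * PP a c j 0 t + Qf a c i t * PP a c j 1 t
noncomputable def R2f (a c : ℝ) (i j : Fin 3) : ℝ → ℝ :=
  fun t => (Q2f a c i t * PP a c j 0 t + Q1f a c i t * PP a c j 1 t) +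
    (Q1f a c i t * PP a c j 1 t + Qf a c i t * PP a c j 2 t)
noncomputable def Sf (a c : ℝ) (i j : Fin 3) : ℝ → ℝ :=
  fun t => Rf a c i j t + 2 * R1f a c i j t
noncomputable def S1f (a c : ℝ) (i j : Fin 3) : ℝ → ℝ :=
  fun t => R1f a c i j t + 2 * R2f a c i j t
noncomputable def Tf (a c : ℝ) (i j m : Fin 3) : ℝ → ℝ :=
  fun t => Sf a c i j t * PP a c m 0 t
noncomputable def T1f (a c : ℝ) (i j m : Fin 3) : ℝ → ℝ :=
  fun t => S1f a c i j t * PP a c m 0 t + Sf a c i j t * PP a c m 1 t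
noncomputable def Wf (a c : ℝ) (i j m : Fin 3) : ℝ → ℝ :=
  fun t => Tf a c i j m t + 2 * T1f a c i j m t

lemma pfn_hasDerivAt (v : ℝ × ℝ × ℝ) (t : ℝ) : HasDerivAt (pfn v) (pfn (dco v) t) t := by
  have h := ((hasDerivAt_const t v.1).add ((Real.hasDerivAt_sin t).const_mul v.2.1)).add
    ((Real.hasDerivAt_cos t).const_mul v.2.2)
  have he : pfn (dco v) t = 0 + v.2.1 * Real.cos t + v.2.2 * -Real.sin t := by
    simp [pfn, dco]; ring
  show HasDerivAt (fun t => v.1 + v.2.1 * Real.sin t + v.2.2 * Real.cos t) _ t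
  rw [he]; exact h

lemma PP_hasDerivAt (a c : ℝ) (ι : Fin 3) (n : ℕ) (t : ℝ) :
    HasDerivAt (PP a c ι n) (PP a c ι (n + 1) t) t := by
  rw [show PP a c ι (n+1) = pfn (dco (dco^[n] (co a c ι))) by
    rw [PP, Function.iterate_succ_apply']]
  exact pfn_hasDerivAt _ t

section derivs
variable (a c : ℝ) (i j m : Fin 3) (t : ℝ)

lemma Qf_hasDerivAt : HasDerivAt (Qf a c i) (Q1f a c i t) t :=
  (PP_hasDerivAt a c i 0 t).add ((PP_hasDerivAt a c i 1 t).const_mul 2)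

lemma Q1f_hasDerivAt : HasDerivAt (Q1f a c i) (Q2f a c i t) t :=
  (PP_hasDerivAt a c i 1 t).add ((PP_hasDerivAt a c i 2 t).const_mul 2)

lemma Rf_hasDerivAt : HasDerivAt (Rf a c i j) (R1f a c i j t) t :=
  (Qf_hasDerivAt a c i t).mul (PP_hasDerivAt a c j 0 t)

lemma R1f_hasDerivAt : HasDerivAt (R1f a c i j) (R2f a c i j t) t :=
  ((Q1f_hasDerivAt a c i t).mul (PP_hasDerivAt a c j 0 t)).add
    ((Qf_hasDerivAt a c i t).mul (PP_hasDerivAt a c j 1 t))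

lemma Sf_hasDerivAt : HasDerivAt (Sf a c i j) (S1f a c i j t) t :=
  (Rf_hasDerivAt a c i j t).add ((R1f_hasDerivAt a c i j t).const_mul 2)

lemma Tf_hasDerivAt : HasDerivAt (Tf a c i j m) (T1f a c i j m t) t :=
  (Sf_hasDerivAt a c i j t).mul (PP_hasDerivAt a c m 0 t)

end derivs

noncomputable def LLc (a B : ℝ) : Fin 3 → ℝ := ![|a|, 3 * B, 3 * B]
noncomputable def bbc (B : ℝ) : Fin 3 → ℝ := ![0, B, B]
noncomputable def mvc (a B : ℝ) : Fin 3 → ℝ := ![|a|, B, B]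

lemma tri {α γ δ t M : ℝ} (h : |α| + |γ| + |δ| ≤ M) :
    |α + γ * Real.sin t + δ * Real.cos t| ≤ M := by
  have h1 : |γ * Real.sin t| ≤ |γ| := by
    rw [abs_mul]; exact mul_le_of_le_one_right (abs_nonneg γ) (Real.abs_sin_le_one t)
  have h2 : |δ * Real.cos t| ≤ |δ| := by
    rw [abs_mul]; exact mul_le_of_le_one_right (abs_nonneg δ) (Real.abs_cos_le_one t)
  calc |α + γ * Real.sin t + δ * Real.cos t|
      ≤ |α + γ * Real.sin t| + |δ * Real.cos t| := abs_add_le _ _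
    _ ≤ |α| + |γ * Real.sin t| + |δ * Real.cos t| := by
        have := abs_add_le α (γ * Real.sin t); linarith
    _ ≤ M := by linarith

lemma tri' {e : ℝ} (α γ δ : ℝ) {t M : ℝ} (he : e = α + γ * Real.sin t + δ * Real.cos t)
    (h : |α| + |γ| + |δ| ≤ M) : |e| ≤ M := he ▸ tri h

section bounds
variable {a c B : ℝ} (hc : |c| = B) (ι : Fin 3) (t : ℝ)
include hc

lemma b_Q : |Qf a c ι t| ≤ LLc a B ι := by
  have hB : 0 ≤ B := hc ▸ abs_nonneg c
  fin_cases ι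
  · exact tri' (t := t) a 0 0 (by simp [Qf, PP, co, dco, pfn, Function.iterate_succ_apply'] <;> ring) (by simp [LLc])
  · exact tri' (t := t) 0 c (2*c) (by simp [Qf, PP, co, dco, pfn, Function.iterate_succ_apply'] <;> ring) (by simp [LLc, abs_mul, hc]; linarith)
  · exact tri' (t := t) 0 (-2*c) c (by simp [Qf, PP, co, dco, pfn, Function.iterate_succ_apply'] <;> ring) (by simp [LLc, abs_mul, hc]; linarith)

lemma b_Q1 : |Q1f a c ι t| ≤ 3 * bbc B ι := by
  have hB : 0 ≤ B := hc ▸ abs_nonneg c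
  fin_cases ι
  · exact tri' (t := t) 0 0 0 (by simp [Q1f, PP, co, dco, pfn, Function.iterate_succ_apply'] <;> ring) (by simp [bbc])
  · exact tri' (t := t) 0 (-2*c) c (by simp [Q1f, PP, co, dco, pfn, Function.iterate_succ_apply'] <;> ring) (by simp [bbc, abs_mul, hc]; linarith)
  · exact tri' (t := t) 0 (-c) (-2*c) (by simp [Q1f, PP, co, dco, pfn, Function.iterate_succ_apply'] <;> ring) (by simp [bbc, abs_mul, hc]; linarith)

lemma b_QQ : |2 * Q1f a c ι t + 4 * Q2f a c ι t| ≤ 14 * bbc B ι := by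
  have hB : 0 ≤ B := hc ▸ abs_nonneg c
  fin_cases ι
  · exact tri' (t := t) 0 0 0 (by simp [Q1f, Q2f, PP, co, dco, pfn, Function.iterate_succ_apply'] <;> ring) (by simp [bbc])
  · exact tri' (t := t) 0 (-8*c) (-6*c) (by simp [Q1f, Q2f, PP, co, dco, pfn, Function.iterate_succ_apply'] <;> ring) (by simp [bbc, abs_mul, hc]; linarith)
  · exact tri' (t := t) 0 (6*c) (-8*c) (by simp [Q1f, Q2f, PP, co, dco, pfn, Function.iterate_succ_apply'] <;> ring) (by simp [bbc, abs_mul, hc]; linarith)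

lemma b_P0 : |PP a c ι 0 t| ≤ mvc a B ι := by
  have hB : 0 ≤ B := hc ▸ abs_nonneg c
  fin_cases ι
  · exact tri' (t := t) a 0 0 (by simp [PP, co, dco, pfn] <;> ring) (by simp [mvc])
  · exact tri' (t := t) 0 c 0 (by simp [PP, co, dco, pfn] <;> ring) (by simp [mvc, hc])
  · exact tri' (t := t) 0 0 c (by simp [PP, co, dco, pfn] <;> ring) (by simp [mvc, hc])

lemma b_P1 : |PP a c ι 1 t| ≤ bbc B ι := by
  have hB : 0 ≤ B := hc ▸ abs_nonneg c
  fin_cases ι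
  · exact tri' (t := t) 0 0 0 (by simp [PP, co, dco, pfn, Function.iterate_succ_apply'] <;> ring) (by simp [bbc])
  · exact tri' (t := t) 0 0 c (by simp [PP, co, dco, pfn, Function.iterate_succ_apply'] <;> ring) (by simp [bbc, hc])
  · exact tri' (t := t) 0 (-c) 0 (by simp [PP, co, dco, pfn, Function.iterate_succ_apply'] <;> ring) (by simp [bbc, hc])

lemma b_P2 : |PP a c ι 2 t| ≤ bbc B ι := by
  have hB : 0 ≤ B := hc ▸ abs_nonneg c
  fin_cases ι
  · exact tri' (t := t) 0 0 0 (by simp [PP, co, dco, pfn, Function.iterate_succ_apply'] <;> ring) (by simp [bbc])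
  · exact tri' (t := t) 0 (-c) 0 (by simp [PP, co, dco, pfn, Function.iterate_succ_apply'] <;> ring) (by simp [bbc, hc])
  · exact tri' (t := t) 0 0 (-c) (by simp [PP, co, dco, pfn, Function.iterate_succ_apply'] <;> ring) (by simp [bbc, hc])

end bounds

lemma amul {x y X Y : ℝ} (hx : |x| ≤ X) (hy : |y| ≤ Y) : |x * y| ≤ X * Y := by
  rw [abs_mul]
  exact mul_le_mul hx hy (abs_nonneg _) ((abs_nonneg x).trans hx)
lemma Wbound {e B Li Lj Lm bi bj mj mm Q Q1 Q2 q0 q1 q2 r0 r1 : ℝ}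
    (he : e = Q*(q0+2*q1)*(r0+2*r1) + 2*Q1*q0*(r0+2*r1) + (2*Q1+4*Q2)*(q0*r0)
      + 2*Q*(q1*r0) + 8*Q1*(q1*r0) + 4*Q*(q2*r0))
    (hB : 0 ≤ B) (hLm : 0 ≤ Lm) (hLi : 0 ≤ Li)
    (hbiB : bi ≤ B) (hmjL : mj ≤ Lj) (hmmL : mm ≤ Lm)
    (hbi : 0 ≤ bi) (hbj : 0 ≤ bj) (hmj : 0 ≤ mj) (hmm : 0 ≤ mm)
    (hkey : 20 * (bi * mj) + 24 * (bi * bj) ≤ 22 * (B * Lj))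
    (hkey2 : Li * bj ≤ B * Li)
    (hQ : |Q| ≤ Li) (hQ1 : |Q1| ≤ 3 * bi) (hQQ : |2*Q1 + 4*Q2| ≤ 14 * bi)
    (hq0 : |q0| ≤ mj) (hq01 : |q0 + 2*q1| ≤ Lj) (hq1 : |q1| ≤ bj) (hq2 : |q2| ≤ bj)
    (hr0 : |r0| ≤ mm) (hr01 : |r0 + 2*r1| ≤ Lm) :
    |e| ≤ 22 * B * Lj * Lm + 6 * B * Li * Lm + Li * Lj * Lm := by
  have hLj : 0 ≤ Lj := le_trans hmj hmjL
  have h2Q1 : |2*Q1| ≤ 6 * bi := by rw [abs_mul, abs_two]; linarith [hQ1]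
  have h2Q : |2*Q| ≤ 2 * Li := by rw [abs_mul, abs_two]; linarith [hQ]
  have h8Q1 : |8*Q1| ≤ 24 * bi := by
    rw [abs_mul, show |(8:ℝ)| = 8 by norm_num]; linarith [hQ1]
  have h4Q : |4*Q| ≤ 4 * Li := by
    rw [abs_mul, show |(4:ℝ)| = 4 by norm_num]; linarith [hQ]
  have t1 := amul (amul hQ hq01) hr01
  have t2 := amul (amul h2Q1 hq0) hr01
  have t3 := amul hQQ (amul hq0 hr0)
  have t4 := amul h2Q (amul hq1 hr0)
  have t5 := amul h8Q1 (amul hq1 hr0)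
  have t6 := amul h4Q (amul hq2 hr0)
  have e1 := abs_le.mp t1
  have e2 := abs_le.mp t2
  have e3 := abs_le.mp t3
  have e4 := abs_le.mp t4
  have e5 := abs_le.mp t5
  have e6 := abs_le.mp t6
  have m1 : mj * mm ≤ mj * Lm := mul_le_mul_of_nonneg_left hmmL hmj
  have m2 : bj * mm ≤ bj * Lm := mul_le_mul_of_nonneg_left hmmL hbj
  have m3 : 14 * bi * (mj * mm) ≤ 14 * bi * (mj * Lm) :=
    mul_le_mul_of_nonneg_left m1 (by positivity)
  have m4 : 2 * Li * (bj * mm) ≤ 2 * Li * (bj * Lm) :=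
    mul_le_mul_of_nonneg_left m2 (by positivity)
  have m5 : 24 * bi * (bj * mm) ≤ 24 * bi * (bj * Lm) :=
    mul_le_mul_of_nonneg_left m2 (by positivity)
  have m6 : 4 * Li * (bj * mm) ≤ 4 * Li * (bj * Lm) :=
    mul_le_mul_of_nonneg_left m2 (by positivity)
  have hk : (20 * (bi * mj) + 24 * (bi * bj)) * Lm ≤ 22 * (B * Lj) * Lm :=
    mul_le_mul_of_nonneg_right hkey hLm
  have hk2 : Li * bj * Lm ≤ B * Li * Lm := mul_le_mul_of_nonneg_right hkey2 hLm
  rw [he, abs_le]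
  constructor <;> linarith [e1.1, e1.2, e2.1, e2.2, e3.1, e3.2, e4.1, e4.2, e5.1, e5.2,
    e6.1, e6.2, m3, m4, m5, m6, hk, hk2]

lemma Tbound {e B Li Lj Lm bi bj mj mm Q Q1 q0 q1 r0 : ℝ}
    (he : e = (Q*q0 + 2*(Q1*q0 + Q*q1))*r0)
    (hB : 0 ≤ B) (hLm : 0 ≤ Lm) (hLi : 0 ≤ Li)
    (hbiB : bi ≤ B) (hmjL : mj ≤ Lj) (hmmL : mm ≤ Lm)
    (hbi : 0 ≤ bi) (hbj : 0 ≤ bj) (hmj : 0 ≤ mj) (hmm : 0 ≤ mm)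
    (hbjB : bj ≤ B)
    (hQ : |Q| ≤ Li) (hQ1 : |Q1| ≤ 3 * bi)
    (hq0 : |q0| ≤ mj) (hq1 : |q1| ≤ bj)
    (hr0 : |r0| ≤ mm) :
    |e| ≤ 22 * B * Lj * Lm + 6 * B * Li * Lm + Li * Lj * Lm := by
  have hLj : 0 ≤ Lj := le_trans hmj hmjL
  have h2Q1 : |2*Q1| ≤ 6 * bi := by rw [abs_mul, abs_two]; linarith [hQ1]
  have h2Q : |2*Q| ≤ 2 * Li := by rw [abs_mul, abs_two]; linarith [hQ]
  have he' : e = Q*(q0*r0) + 2*Q1*(q0*r0) + 2*Q*(q1*r0) := by rw [he]; ring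
  have t1 := amul hQ (amul hq0 hr0)
  have t2 := amul h2Q1 (amul hq0 hr0)
  have t3 := amul h2Q (amul hq1 hr0)
  have e1 := abs_le.mp t1
  have e2 := abs_le.mp t2
  have e3 := abs_le.mp t3
  have m0 : mj * mm ≤ Lj * Lm := mul_le_mul hmjL hmmL hmm hLj
  have m1 : Li * (mj * mm) ≤ Li * (Lj * Lm) := mul_le_mul_of_nonneg_left m0 hLi
  have m2 : 6 * bi * (mj * mm) ≤ 6 * B * (Lj * Lm) :=
    mul_le_mul (by linarith) m0 (by positivity) (by positivity)
  have m3 : 2 * Li * (bj * mm) ≤ 2 * Li * (B * Lm) :=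
    mul_le_mul_of_nonneg_left (mul_le_mul hbjB hmmL hmm hB) (by positivity)
  have m4 : 2 * Li * (B * Lm) ≤ 2 * (B * Li * Lm) := le_of_eq (by ring)
  rw [he', abs_le]
  constructor <;> linarith [e1.1, e1.2, e2.1, e2.2, e3.1, e3.2, m1, m2, m3, m4,
    mul_nonneg (mul_nonneg hB hLj) hLm, mul_nonneg (mul_nonneg hB hLi) hLm]

lemma glue {g : ℝ → ℝ} {C : ℝ}
    (h0 : ∀ z, |g z| ≤ C * |z|)
    (hd : ∀ z, z ≠ 0 → ∃ d, HasDerivAt g d z ∧ |d| ≤ C) :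
    ∀ x y, |g x - g y| ≤ C * |x - y| := by
  classical
  choose! d hdd hdb using hd
  have same : ∀ s : Set ℝ, Convex ℝ s → (∀ z ∈ s, z ≠ 0) →
      ∀ u ∈ s, ∀ v ∈ s, |g u - g v| ≤ C * |u - v| := by
    intro s hs hz u hu v hv
    have := hs.norm_image_sub_le_of_norm_hasDerivWithin_le (f' := d)
      (fun z hzs => (hdd z (hz z hzs)).hasDerivWithinAt)
      (fun z hzs => by simpa [Real.norm_eq_abs] using hdb z (hz z hzs)) hv hu
    simpa [Real.norm_eq_abs] using this
  have mixed : ∀ u v : ℝ, u ≤ 0 → 0 ≤ v → |g u - g v| ≤ C * |u - v| := by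
    intro u v hu hv
    have h1 := h0 u
    have h2 := h0 v
    have habs : |u - v| = |u| + |v| := by
      rw [abs_of_nonpos hu, abs_of_nonneg hv, abs_of_nonpos (by linarith : u - v ≤ 0)]; ring
    have h3 : |g u - g v| ≤ |g u| + |g v| := abs_sub _ _
    rw [habs]
    calc |g u - g v| ≤ C * |u| + C * |v| := by linarith
      _ = C * (|u| + |v|) := by ring
  intro x y
  rcases le_or_gt x 0 with h1 | h1 <;> rcases le_or_gt y 0 with h2 | h2
  · rcases eq_or_lt_of_le h1 with hx0 | hx0
    · have := mixed y x h2 (le_of_eq hx0.symm)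
      rw [abs_sub_comm (g x), abs_sub_comm x]
      exact this
    · rcases eq_or_lt_of_le h2 with hy0 | hy0
      · exact mixed x y h1 (le_of_eq hy0.symm)
      · exact same (Set.Iio 0) (convex_Iio 0) (fun z hz => ne_of_lt hz) x hx0 y hy0
  · exact mixed x y h1 (le_of_lt h2)
  · have := mixed y x h2 (le_of_lt h1)
    rw [abs_sub_comm (g x), abs_sub_comm x]
    exact this
  · exact same (Set.Ioi 0) (convex_Ioi 0) (fun z hz => ne_of_gt hz) x h1 y h2


lemma LLc_nn {a B : ℝ} (hB : 0 ≤ B) (ι : Fin 3) : 0 ≤ LLc a B ι := by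
  fin_cases ι <;> simp [LLc] <;> linarith [abs_nonneg a]

lemma bbc_nn {B : ℝ} (hB : 0 ≤ B) (ι : Fin 3) : 0 ≤ bbc B ι := by
  fin_cases ι <;> simp [bbc] <;> linarith

lemma mvc_nn {a B : ℝ} (hB : 0 ≤ B) (ι : Fin 3) : 0 ≤ mvc a B ι := by
  fin_cases ι <;> simp [mvc] <;> linarith [abs_nonneg a]

lemma bbc_le {B : ℝ} (hB : 0 ≤ B) (ι : Fin 3) : bbc B ι ≤ B := by
  fin_cases ι <;> simp [bbc] <;> linarith

lemma mvc_le {a B : ℝ} (hB : 0 ≤ B) (ι : Fin 3) : mvc a B ι ≤ LLc a B ι := by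
  fin_cases ι <;> simp [mvc, LLc] <;> linarith

lemma hkey_lem {a B : ℝ} (hB : 0 ≤ B) (i j : Fin 3) :
    20 * (bbc B i * mvc a B j) + 24 * (bbc B i * bbc B j) ≤ 22 * (B * LLc a B j) := by
  fin_cases i <;> fin_cases j <;> simp [bbc, mvc, LLc] <;>
    nlinarith [abs_nonneg a, mul_nonneg hB (abs_nonneg a), mul_nonneg hB hB]

lemma hkey2_lem {a B : ℝ} (hB : 0 ≤ B) (i j : Fin 3) :
    LLc a B i * bbc B j ≤ B * LLc a B i := by
  have h := LLc_nn (a := a) hB i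
  fin_cases j <;> simp [bbc] <;> nlinarith [h]

lemma key (a b k : ℝ)
    (f : Fin 3 → ℝ → ℝ)
    (hf0 : ∀ x, f 0 x = a * x)
    (hf1 : ∀ x, f 1 x =
      if x = 0 then 0 else b * Real.sqrt k * |x| * Real.sin (Real.log (x ^ 2 / 2)))
    (hf2 : ∀ x, f 2 x =
      if x = 0 then 0 else b * Real.sqrt k * |x| * Real.cos (Real.log (x ^ 2 / 2)))
    (Lf : Fin 3 → Fin 3 → ℝ → ℝ)
    (hLf : ∀ (j i : Fin 3) (x : ℝ),
      Lf j i x = if x = 0 then 0 else deriv (f i) x * f j x)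
    (LLf : Fin 3 → Fin 3 → Fin 3 → ℝ → ℝ)
    (hLLf : ∀ (m j i : Fin 3) (x : ℝ),
      LLf m j i x = if x = 0 then 0 else deriv (Lf j i) x * f m x)
    (m j i : Fin 3) (x : ℝ) (hx : x ≠ 0) :
    ∃ d, HasDerivAt (LLf m j i) d x ∧
      |d| ≤ 22 * (|b| * Real.sqrt k) * LLc a (|b| * Real.sqrt k) j * LLc a (|b| * Real.sqrt k) m
            + 6 * (|b| * Real.sqrt k) * LLc a (|b| * Real.sqrt k) i * LLc a (|b| * Real.sqrt k) m
            + LLc a (|b| * Real.sqrt k) i * LLc a (|b| * Real.sqrt k) j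
              * LLc a (|b| * Real.sqrt k) m ∧
      |LLf m j i x|
        ≤ (22 * (|b| * Real.sqrt k) * LLc a (|b| * Real.sqrt k) j * LLc a (|b| * Real.sqrt k) m
            + 6 * (|b| * Real.sqrt k) * LLc a (|b| * Real.sqrt k) i * LLc a (|b| * Real.sqrt k) m
            + LLc a (|b| * Real.sqrt k) i * LLc a (|b| * Real.sqrt k) j
              * LLc a (|b| * Real.sqrt k) m) * |x| := by
  set B : ℝ := |b| * Real.sqrt k with hBdef
  have hBnn : 0 ≤ B := by rw [hBdef]; positivity
  obtain ⟨s, hs, V, hVo, hxV, hV⟩ :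
      ∃ s : ℝ, |s| = 1 ∧ ∃ V : Set ℝ, IsOpen V ∧ x ∈ V ∧ ∀ y ∈ V, y ≠ 0 ∧ |y| = s * y := by
    rcases lt_or_gt_of_ne hx with h | h
    · exact ⟨-1, by norm_num, Set.Iio 0, isOpen_Iio, h,
        fun y hy => ⟨ne_of_lt hy, by rw [abs_of_neg hy]; ring⟩⟩
    · exact ⟨1, by norm_num, Set.Ioi 0, isOpen_Ioi, h,
        fun y hy => ⟨ne_of_gt hy, by rw [abs_of_pos hy]; ring⟩⟩
  set c : ℝ := s * (b * Real.sqrt k) with hcdef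
  have hc : |c| = B := by
    rw [hcdef, abs_mul, hs, one_mul, abs_mul, abs_of_nonneg (Real.sqrt_nonneg k), hBdef]
  have hfval : ∀ ι : Fin 3, ∀ y ∈ V, f ι y = y * PP a c ι 0 (uu y) := by
    intro ι y hy
    obtain ⟨hy0, hys⟩ := hV y hy
    fin_cases ι
    · show f 0 y = y * PP a c 0 0 (uu y)
      rw [hf0]; simp [PP, co, pfn]; ring
    · show f 1 y = y * PP a c 1 0 (uu y)
      rw [hf1, if_neg hy0, hys]; simp [PP, co, pfn, uu]; ring
    · show f 2 y = y * PP a c 2 0 (uu y)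
      rw [hf2, if_neg hy0, hys]; simp [PP, co, pfn, uu]; ring
  have hfd : ∀ ι : Fin 3, ∀ y ∈ V, HasDerivAt (f ι) (Qf a c ι (uu y)) y := by
    intro ι y hy
    have hb := base (PP_hasDerivAt a c ι 0) (hV y hy).1
    exact hb.congr_of_eventuallyEq
      (Filter.eventuallyEq_of_mem (hVo.mem_nhds hy) (fun z hz => hfval ι z hz))
  have hLfval : ∀ y ∈ V, Lf j i y = y * Rf a c i j (uu y) := by
    intro y hy
    rw [hLf j i y, if_neg (hV y hy).1, (hfd i y hy).deriv, hfval j y hy]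
    simp only [Rf]; ring
  have hLfd : ∀ y ∈ V, HasDerivAt (Lf j i) (Sf a c i j (uu y)) y := by
    intro y hy
    have hb := base (Rf_hasDerivAt a c i j) (hV y hy).1
    exact hb.congr_of_eventuallyEq
      (Filter.eventuallyEq_of_mem (hVo.mem_nhds hy) (fun z hz => hLfval z hz))
  have hLLfval : ∀ y ∈ V, LLf m j i y = y * Tf a c i j m (uu y) := by
    intro y hy
    rw [hLLf m j i y, if_neg (hV y hy).1, (hLfd y hy).deriv, hfval m y hy]
    simp only [Tf]; ring
  have hLLfd : HasDerivAt (LLf m j i) (Wf a c i j m (uu x)) x := by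
    have hb := base (Tf_hasDerivAt a c i j m) (hV x hxV).1
    exact hb.congr_of_eventuallyEq
      (Filter.eventuallyEq_of_mem (hVo.mem_nhds hxV) (fun z hz => hLLfval z hz))
  have hWb : |Wf a c i j m (uu x)|
      ≤ 22 * B * LLc a B j * LLc a B m + 6 * B * LLc a B i * LLc a B m
        + LLc a B i * LLc a B j * LLc a B m := by
    exact Wbound (Q := Qf a c i (uu x)) (Q1 := Q1f a c i (uu x)) (Q2 := Q2f a c i (uu x))
      (q0 := PP a c j 0 (uu x)) (q1 := PP a c j 1 (uu x)) (q2 := PP a c j 2 (uu x))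
      (r0 := PP a c m 0 (uu x)) (r1 := PP a c m 1 (uu x))
      (bi := bbc B i) (bj := bbc B j) (mj := mvc a B j) (mm := mvc a B m)
      (by simp only [Wf, Tf, T1f, Sf, S1f, Rf, R1f, R2f]; try ring)
      hBnn (LLc_nn hBnn m) (LLc_nn hBnn i)
      (bbc_le hBnn i) (mvc_le hBnn j) (mvc_le hBnn m)
      (bbc_nn hBnn i) (bbc_nn hBnn j) (mvc_nn hBnn j) (mvc_nn hBnn m)
      (hkey_lem hBnn i j) (hkey2_lem hBnn i j)
      (b_Q hc i (uu x)) (b_Q1 hc i (uu x)) (b_QQ hc i (uu x))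
      (b_P0 hc j (uu x)) (b_Q hc j (uu x)) (b_P1 hc j (uu x)) (b_P2 hc j (uu x))
      (b_P0 hc m (uu x)) (b_Q hc m (uu x))
  have hTb : |Tf a c i j m (uu x)|
      ≤ 22 * B * LLc a B j * LLc a B m + 6 * B * LLc a B i * LLc a B m
        + LLc a B i * LLc a B j * LLc a B m := by
    exact Tbound (Q := Qf a c i (uu x)) (Q1 := Q1f a c i (uu x))
      (q0 := PP a c j 0 (uu x)) (q1 := PP a c j 1 (uu x)) (r0 := PP a c m 0 (uu x))
      (bi := bbc B i) (bj := bbc B j) (mj := mvc a B j) (mm := mvc a B m)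
      (by simp only [Tf, Sf, Rf, R1f]; try ring)
      hBnn (LLc_nn hBnn m) (LLc_nn hBnn i)
      (bbc_le hBnn i) (mvc_le hBnn j) (mvc_le hBnn m)
      (bbc_nn hBnn i) (bbc_nn hBnn j) (mvc_nn hBnn j) (mvc_nn hBnn m)
      (bbc_le hBnn j)
      (b_Q hc i (uu x)) (b_Q1 hc i (uu x))
      (b_P0 hc j (uu x)) (b_P1 hc j (uu x)) (b_P0 hc m (uu x))
  refine ⟨Wf a c i j m (uu x), hLLfd, by simpa using hWb, ?_⟩
  rw [hLLfval x hxV, abs_mul, mul_comm]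
  exact mul_le_mul_of_nonneg_right (by simpa using hTb) (abs_nonneg x)


end LipIII

open LipIII in
/-- **Lipschitz properties III** (example system, Lemma 18): the second Lie derivatives
`L_{f_m} L_{f_j} f_i (x) = (L_{f_j} f_i)′(x) f_m(x)` (extended by `0` at `x = 0`) of the
example vector fields are globally Lipschitz with constants
`L_{ijm} = 22|b|√k L_j L_m + 6|b|√k L_i L_m + L_i L_j L_m`. -/
theorem lipschitz_properties_III
    (a b k : ℝ) (hb : b ≠ 0) (hk : 0 < k)
    (f : Fin 3 → ℝ → ℝ)
    (hf0 : ∀ x, f 0 x = a * x)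
    (hf1 : ∀ x, f 1 x =
      if x = 0 then 0 else b * Real.sqrt k * |x| * Real.sin (Real.log (x ^ 2 / 2)))
    (hf2 : ∀ x, f 2 x =
      if x = 0 then 0 else b * Real.sqrt k * |x| * Real.cos (Real.log (x ^ 2 / 2)))
    (L : Fin 3 → ℝ)
    (hL0 : L 0 = |a|) (hL1 : L 1 = 3 * |b| * Real.sqrt k) (hL2 : L 2 = 3 * |b| * Real.sqrt k)
    (Lf : Fin 3 → Fin 3 → ℝ → ℝ)
    (hLf : ∀ (j i : Fin 3) (x : ℝ),
      Lf j i x = if x = 0 then 0 else deriv (f i) x * f j x)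
    (LLf : Fin 3 → Fin 3 → Fin 3 → ℝ → ℝ)
    (hLLf : ∀ (m j i : Fin 3) (x : ℝ),
      LLf m j i x = if x = 0 then 0 else deriv (Lf j i) x * f m x) :
    ∀ m j i : Fin 3,
      ∀ x y : ℝ, |LLf m j i x - LLf m j i y|
        ≤ (22 * |b| * Real.sqrt k * L j * L m + 6 * |b| * Real.sqrt k * L i * L m
            + L i * L j * L m) * |x - y| := by
  intro m j i
  set B : ℝ := |b| * Real.sqrt k with hBdef
  have hLL : ∀ ι : Fin 3, L ι = LLc a B ι := by
    intro ι
    fin_cases ι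
    · show L 0 = LLc a B 0
      simp [LLc, hL0]
    · show L 1 = LLc a B 1
      simp [LLc, hL1, hBdef]; ring
    · show L 2 = LLc a B 2
      simp [LLc, hL2, hBdef]; ring
  have hCeq : 22 * |b| * Real.sqrt k * L j * L m + 6 * |b| * Real.sqrt k * L i * L m
      + L i * L j * L m
      = 22 * B * LLc a B j * LLc a B m + 6 * B * LLc a B i * LLc a B m
        + LLc a B i * LLc a B j * LLc a B m := by
    rw [hLL i, hLL j, hLL m, hBdef]; ring
  rw [hCeq]
  have h0 : ∀ z, |LLf m j i z|
      ≤ (22 * B * LLc a B j * LLc a B m + 6 * B * LLc a B i * LLc a B m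
        + LLc a B i * LLc a B j * LLc a B m) * |z| := by
    intro z
    by_cases hz : z = 0
    · simp [hLLf, hz]
    · have := (key a b k f hf0 hf1 hf2 Lf hLf LLf hLLf m j i z hz).choose_spec.2.2
      simpa [hBdef] using this
  have hd : ∀ z, z ≠ 0 → ∃ d, HasDerivAt (LLf m j i) d z
      ∧ |d| ≤ 22 * B * LLc a B j * LLc a B m + 6 * B * LLc a B i * LLc a B m
        + LLc a B i * LLc a B j * LLc a B m := by
    intro z hz
    obtain ⟨d, h1, h2, _⟩ := key a b k f hf0 hf1 hf2 Lf hLf LLf hLLf m j i z hz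
    exact ⟨d, h1, by simpa [hBdef] using h2⟩
  exact glue h0 hd
end
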